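/- arXiv:1607.00819 — 3 statements merged into one kernel-verified Lean document; each statement's English description precedes it below -/
import Mathlib

section
/- Let (A, R, N) be a strongly consistent AFN and ADF^FN its corresponding ADF. If X ⊆ A is strongly coherent in (A, R, N) (and thus pd-acyclic conflict-free in ADF^FN), then X^att coincides with the acyclic discarded set X^{a+} of X in ADF^FN. -/
open Classical

universe u

namespace Dialectical

variable {α : Type u}

/-! ### Two-valued (partial) interpretations -/

/-- A partial two-valued interpretation: `some true` = t, `some false` = f, `none` = undefined. -/
abbrev Interp (α : Type u) := α → Option Bool

/-- The domain of an interpretation. -/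
def idom (v : Interp α) : Set α := {a | v a ≠ none}

/-- The set of arguments mapped to t. -/
def tset (v : Interp α) : Set α := {a | v a = some true}

/-- The set of arguments mapped to f. -/
def fset (v : Interp α) : Set α := {a | v a = some false}

/-- `w` is a completion of `v` to the set `Z`. -/
def Completion (v w : Interp α) (Z : Set α) : Prop :=
  idom w = Z ∧ ∀ a ∈ idom v, w a = v a

/-- The interpretation assigning t on `T` and f on `F' \ T`. -/
noncomputable def mkInterp (T F' : Set α) : Interp α :=
  fun a => if a ∈ T then some true else if a ∈ F' then some false else none

/-! ### Abstract dialectical frameworks -/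

/-- An abstract dialectical framework: links and acceptance conditions
(`true` = in, `false` = out). -/
structure ADF (α : Type u) where
  L : α → α → Prop
  C : α → Set α → Bool

namespace ADF

variable (D : ADF α)

/-- The parents of an argument. -/
def par (a : α) : Set α := {p | D.L p a}

/-- Evaluating the acceptance condition of `s` under an interpretation. -/
def evalCond (s : α) (w : Interp α) : Bool := D.C s (tset w ∩ D.par s)

/-- `s` is decisively in w.r.t. `v`. -/
def DecisivelyIn (v : Interp α) (s : α) : Prop :=
  ∀ w : Interp α, Completion v w (idom v ∪ D.par s) → D.evalCond s w = true

/-- `s` is decisively out w.r.t. `v`. -/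
def DecisivelyOut (v : Interp α) (s : α) : Prop :=
  ∀ w : Interp α, Completion v w (idom v ∪ D.par s) → D.evalCond s w = false

/-- `v` is a minimal decisively in interpretation for `s` (`v ∈ min_dec(in,s)`). -/
def MinDecIn (v : Interp α) (s : α) : Prop :=
  D.DecisivelyIn v s ∧
  ∀ w : Interp α, D.DecisivelyIn w s → tset w ⊆ tset v → fset w ⊆ fset v →
    tset w = tset v ∧ fset w = fset v

/-- `pd` is a positive dependency function on `X`. -/
def PDFun (X : Set α) (pd : α → Option (Interp α)) : Prop :=
  ∀ a ∈ X,
    (∀ v, pd a = some v → D.MinDecIn v a ∧ tset v ⊆ X) ∧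
    (pd a = none → ¬ ∃ v, D.MinDecIn v a ∧ tset v ⊆ X)

end ADF

/-- The subset of `X` on which `pd` is non-null. -/
def soundDom (X : Set α) (pd : α → Option (Interp α)) : Set α :=
  {a ∈ X | pd a ≠ none}

namespace ADF
variable (D : ADF α)

/-- `pd` is a maximally sound pd-function of `X`. -/
def MaxSound (X : Set α) (pd : α → Option (Interp α)) : Prop :=
  D.PDFun X pd ∧
  ¬ ∃ (X'' : Set α) (pd' : α → Option (Interp α)),
      D.PDFun X'' pd' ∧ (∀ a ∈ X'', pd' a ≠ none) ∧
      soundDom X pd ⊂ X'' ∧ X'' ⊆ X ∧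
      ∀ a ∈ soundDom X pd, pd' a = pd a

end ADF

/-- The t-part of the interpretation assigned by `pd` to `a`. -/
def pdT (pd : α → Option (Interp α)) (a : α) : Set α :=
  {b | ∃ v, pd a = some v ∧ b ∈ tset v}

/-- The f-part of the interpretation assigned by `pd` to `a`. -/
def pdF (pd : α → Option (Interp α)) (a : α) : Set α :=
  {b | ∃ v, pd a = some v ∧ b ∈ fset v}

/-- `(Fs, G, B)` is a partially acyclic positive dependency evaluation for `x`
based on the pd-function `pd` of `X`. -/
def IsPAEvalWith (pd : α → Option (Interp α)) (X : Set α)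
    (x : α) (Fs : Set α) (G : List α) (B : Set α) : Prop :=
  (∀ a ∈ G, a ∉ Fs) ∧ G.Nodup ∧
  x ∈ X ∧ Fs ⊆ X ∧ (∀ a ∈ G, a ∈ X) ∧
  (∀ a ∈ Fs, pd a ≠ none) ∧ (∀ a ∈ G, pd a ≠ none) ∧
  (G = [] → x ∈ Fs) ∧ (G ≠ [] → G.getLast? = some x) ∧
  (∀ i : ℕ, ∀ h : i < G.length,
      pdT pd (G.get ⟨i, h⟩) ⊆
        Fs ∪ {b | ∃ j : ℕ, ∃ hj : j < G.length, j < i ∧ G.get ⟨j, hj⟩ = b}) ∧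
  (∀ a ∈ Fs, pdT pd a ⊆ Fs) ∧
  (∀ a ∈ Fs, ∃ b ∈ Fs, a ∈ pdT pd b) ∧
  B = (⋃ a ∈ Fs, pdF pd a) ∪ ⋃ a ∈ {c | c ∈ G}, pdF pd a

namespace ADF
variable (D : ADF α)

/-- `(Fs, G, B)` is a partially acyclic positive dependency evaluation for `x` on `X`. -/
def PAEval (X : Set α) (x : α) (Fs : Set α) (G : List α) (B : Set α) : Prop :=
  ∃ pd, D.MaxSound X pd ∧ IsPAEvalWith pd X x Fs G B

/-- `(G, B)` is an acyclic positive dependency evaluation for `x` on `X`. -/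
def AcyclicEval (X : Set α) (x : α) (G : List α) (B : Set α) : Prop :=
  D.PAEval X x ∅ G B

/-- The standard discarded set `X⁺`. -/
def stdDiscarded (X : Set α) : Set α :=
  {a | ∀ Fs G B, D.PAEval Set.univ a Fs G B → (B ∩ X).Nonempty}

/-- The partially acyclic discarded set `X^{p+}`. -/
def pDiscarded (X : Set α) : Set α :=
  {a | ¬ ∃ Fs G B, D.PAEval Set.univ a Fs G B ∧ Fs ⊆ X ∧ B ∩ X = ∅}

/-- The acyclic discarded set `X^{a+}`. -/
def aDiscarded (X : Set α) : Set α :=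
  {a | ∀ G B, D.AcyclicEval Set.univ a G B → (B ∩ X).Nonempty}

/-- The standard range of `X`. -/
noncomputable def stdRange (X : Set α) : Interp α := mkInterp X (D.stdDiscarded X \ X)

/-- The partially acyclic range of `X`. -/
noncomputable def pRange (X : Set α) : Interp α := mkInterp X (D.pDiscarded X \ X)

/-- The acyclic range of `X`. -/
noncomputable def aRange (X : Set α) : Interp α := mkInterp X (D.aDiscarded X \ X)

/-- Conflict-freeness in an ADF. -/
def ConflictFree (X : Set α) : Prop := ∀ s ∈ X, D.C s (X ∩ D.par s) = true

/-- pd-acyclic conflict-freeness in an ADF. -/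
def PDAcyclicCF (X : Set α) : Prop :=
  ∀ a ∈ X, ∃ G B, D.AcyclicEval X a G B ∧ B ∩ X = ∅

def CCAdmissible (X : Set α) : Prop :=
  D.ConflictFree X ∧ ∀ e ∈ X, D.DecisivelyIn (D.stdRange X) e

def CA2Admissible (X : Set α) : Prop :=
  D.ConflictFree X ∧ ∀ e ∈ X, D.DecisivelyIn (D.pRange X) e

def AAAdmissible (X : Set α) : Prop :=
  D.PDAcyclicCF X ∧ ∀ e ∈ X, D.DecisivelyIn (D.aRange X) e

def CCComplete (X : Set α) : Prop :=
  D.CCAdmissible X ∧ ∀ e, D.DecisivelyIn (D.stdRange X) e → e ∈ X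

def CA2Complete (X : Set α) : Prop :=
  D.CA2Admissible X ∧ ∀ e, D.DecisivelyIn (D.pRange X) e → e ∈ X

def AAComplete (X : Set α) : Prop :=
  D.AAAdmissible X ∧ ∀ e, D.DecisivelyIn (D.aRange X) e → e ∈ X

def CCPreferred (X : Set α) : Prop :=
  D.CCAdmissible X ∧ ∀ Y, D.CCAdmissible Y → X ⊆ Y → X = Y

def CA2Preferred (X : Set α) : Prop :=
  D.CA2Admissible X ∧ ∀ Y, D.CA2Admissible Y → X ⊆ Y → X = Y

def AAPreferred (X : Set α) : Prop :=
  D.AAAdmissible X ∧ ∀ Y, D.AAAdmissible Y → X ⊆ Y → X = Y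

/-- `X` is a model of the ADF. -/
def IsModel (X : Set α) : Prop :=
  D.ConflictFree X ∧ ∀ a, a ∉ X → D.C a (X ∩ D.par a) = false

/-- `X` is a stable extension of the ADF. -/
def IsStable (X : Set α) : Prop :=
  D.PDAcyclicCF X ∧ D.aDiscarded X = Xᶜ

/-- `X` is the grounded extension (the least cc-complete extension). -/
def IsGrounded (X : Set α) : Prop :=
  D.CCComplete X ∧ ∀ Y, D.CCComplete Y → X ⊆ Y

/-- `X` is the acyclic grounded extension (the least aa-complete extension). -/
def IsAcyclicGrounded (X : Set α) : Prop :=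
  D.AAComplete X ∧ ∀ Y, D.AAComplete Y → X ⊆ Y

/-- The link `(r,s)` is supporting. -/
def Supporting (r s : α) : Prop :=
  ¬ ∃ R' ⊆ D.par s, D.C s R' = true ∧ D.C s (R' ∪ {r}) = false

/-- The link `(r,s)` is attacking. -/
def Attacking (r s : α) : Prop :=
  ¬ ∃ R' ⊆ D.par s, D.C s R' = false ∧ D.C s (R' ∪ {r}) = true

/-- Bipolar ADFs. -/
def IsBADF : Prop := ∀ r s, D.L r s → D.Supporting r s ∨ D.Attacking r s

/-- Positive dependency acyclic ADFs (AADF⁺): every partially acyclic evaluation is acyclic. -/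
def IsAADFplus : Prop := ∀ X x Fs G B, D.PAEval X x Fs G B → Fs = ∅

end ADF

/-! ### Frameworks with sets of attacking arguments (SETAFs) -/

/-- A framework with sets of attacking arguments. -/
structure SETAF (α : Type u) where
  R : Set α → α → Prop
  nonempty_of_R : ∀ S a, R S a → S.Nonempty

namespace SETAF

variable (sf : SETAF α)

/-- `X` is conflict-free in the SETAF. -/
def ConflictFree (X : Set α) : Prop := ¬ ∃ S ⊆ X, ∃ a ∈ X, sf.R S a

/-- The discarded set of `X` in the SETAF. -/
def discarded (X : Set α) : Set α := {b | ∃ S ⊆ X, sf.R S b}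

/-- `X` defends `a` in the SETAF. -/
def Defends (X : Set α) (a : α) : Prop :=
  ∀ S, sf.R S a → ∃ s ∈ S, s ∈ sf.discarded X

def Admissible (X : Set α) : Prop := sf.ConflictFree X ∧ ∀ a ∈ X, sf.Defends X a

def Complete (X : Set α) : Prop := sf.Admissible X ∧ ∀ a, sf.Defends X a → a ∈ X

def Preferred (X : Set α) : Prop :=
  sf.Admissible X ∧ ∀ Y, sf.Admissible Y → X ⊆ Y → X = Y

/-- `X` is the grounded extension: the least complete extension. -/
def IsGrounded (X : Set α) : Prop := sf.Complete X ∧ ∀ Y, sf.Complete Y → X ⊆ Y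

def Stable (X : Set α) : Prop := sf.ConflictFree X ∧ sf.discarded X = Xᶜ

/-- The ADF corresponding to a SETAF. -/
noncomputable def toADF : ADF α where
  L x y := ∃ B : Set α, x ∈ B ∧ sf.R B y
  C a B := decide (¬ ∃ S, sf.R S a ∧ S ⊆ B)

end SETAF

/-! ### Extended argumentation frameworks with collective defense attacks (EAFCs) -/

/-- An EAFC: binary attacks `R` and collective defense attacks `D` on attacks. -/
structure EAFC (α : Type u) where
  R : α → α → Prop
  D : Set α → α → α → Prop
  nonempty_of_D : ∀ C a b, D C a b → C.Nonempty
  attack_of_D : ∀ C a b, D C a b → R a b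

namespace EAFC

variable (E : EAFC α)

/-- `a` defeats `b` w.r.t. `X`. -/
def Defeats (X : Set α) (a b : α) : Prop :=
  E.R a b ∧ ¬ ∃ C ⊆ X, E.D C a b

/-- `RS` is a reinstatement set on `X` for the defeat of `b` by `a`. -/
def Reinstatement (X : Set α) (RS : Set (α × α)) (a b : α) : Prop :=
  RS.Finite ∧
  (∀ p ∈ RS, p.1 ∈ X ∧ E.Defeats X p.1 p.2) ∧
  (a, b) ∈ RS ∧
  ∀ p ∈ RS, ∀ C : Set α, E.D C p.1 p.2 → ∃ q ∈ RS, q.2 ∈ C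

/-- The discarded set `X⁺` of `X` in the EAFC. -/
def discarded (X : Set α) : Set α :=
  {b | ∃ a ∈ X, E.Defeats X a b ∧ ∃ RS, E.Reinstatement X RS a b}

/-- `X` defends `a` in the EAFC. -/
def Defends (X : Set α) (a : α) : Prop :=
  ∀ b, E.Defeats X b a → b ∈ E.discarded X

/-- `X` is conflict-free in the EAFC. -/
def ConflictFree (X : Set α) : Prop := ¬ ∃ a ∈ X, ∃ b ∈ X, E.Defeats X a b

def Admissible (X : Set α) : Prop := E.ConflictFree X ∧ ∀ a ∈ X, E.Defends X a

def Complete (X : Set α) : Prop := E.Admissible X ∧ ∀ a, E.Defends X a → a ∈ X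

def Preferred (X : Set α) : Prop :=
  E.Admissible X ∧ ∀ Y, E.Admissible Y → X ⊆ Y → X = Y

def Stable (X : Set α) : Prop :=
  E.ConflictFree X ∧ ∀ b, b ∉ X → ∃ a ∈ X, E.Defeats X a b

/-- The characteristic function of the EAFC. -/
def charFun (X : Set α) : Set α := {a | E.Defends X a}

/-- The grounded extension of the EAFC. -/
def grounded : Set α := ⋃ i : ℕ, E.charFun^[i] ∅

/-- Every argument has finitely many attackers, every attack finitely many defense attackers. -/
def Finitary : Prop :=
  (∀ a, {b | E.R b a}.Finite) ∧ ∀ a b, {C | E.D C a b}.Finite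

/-- Strong consistency of an EAFC. -/
def StronglyConsistent : Prop :=
  ¬ ∃ (x y z : α) (X : Set α), E.R x y ∧ x ∈ X ∧ E.D X z y

/-- The EAFC is bounded hierarchical. -/
def BoundedHierarchical : Prop :=
  ∃ n : ℕ, ∃ hn : 0 < n,
    ∃ (As : Fin n → Set α) (Rs : Fin n → α → α → Prop)
      (Ds : Fin n → Set α → α → α → Prop),
      (∀ C a b, ¬ Ds ⟨n - 1, Nat.sub_lt hn one_pos⟩ C a b) ∧
      (Set.univ = ⋃ i, As i) ∧
      (∀ a b, E.R a b ↔ ∃ i, Rs i a b) ∧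
      (∀ C a b, E.D C a b ↔ ∃ i, Ds i C a b) ∧
      (∀ i a b, Rs i a b → a ∈ As i ∧ b ∈ As i) ∧
      (∀ i C a b, Ds i C a b → Rs i a b ∧
        ∃ h : (i : ℕ) + 1 < n, C ⊆ As ⟨(i : ℕ) + 1, h⟩)

/-- The ADF corresponding to a strongly consistent EAFC. -/
noncomputable def toADF : ADF α where
  L a b := E.R a b ∨ ∃ (c : α) (X : Set α), a ∈ X ∧ E.D X c b
  C a B := decide (¬ ∃ x ∈ B, E.R x a ∧ ¬ ∃ B' ⊆ B, E.D B' x a)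

end EAFC

/-! ### Argumentation frameworks with necessities (AFNs) -/

/-- An AFN: binary attacks `R` and necessity relation `N`. -/
structure AFN (α : Type u) where
  R : α → α → Prop
  N : Set α → α → Prop
  nonempty_of_N : ∀ B a, N B a → B.Nonempty

namespace AFN

variable (fn : AFN α)

/-- `G` is a powerful sequence for `a` on `X`. -/
def PowerfulSeq (X : Set α) (G : List α) (a : α) : Prop :=
  G ≠ [] ∧ (∀ b ∈ G, b ∈ X) ∧ G.getLast? = some a ∧
  ∀ i : ℕ, ∀ h : i < G.length, ∀ B : Set α, fn.N B (G.get ⟨i, h⟩) →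
    ∃ j : ℕ, ∃ hj : j < G.length, j < i ∧ G.get ⟨j, hj⟩ ∈ B

/-- `a` is powerful in `X`. -/
def Powerful (X : Set α) (a : α) : Prop :=
  a ∈ X ∧ ∃ G, fn.PowerfulSeq X G a

/-- `X` is coherent. -/
def Coherent (X : Set α) : Prop := ∀ a ∈ X, fn.Powerful X a

/-- The discarded set `X^att` of `X` in the AFN. -/
def discardedAtt (X : Set α) : Set α :=
  {a | ∀ C, fn.Coherent C → a ∈ C → ∃ c ∈ C, ∃ e ∈ X, fn.R e c}

/-- `X` is conflict-free in the AFN. -/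
def ConflictFree (X : Set α) : Prop := ¬ ∃ a ∈ X, ∃ b ∈ X, fn.R a b

/-- `X` is strongly coherent. -/
def StronglyCoherent (X : Set α) : Prop := fn.ConflictFree X ∧ fn.Coherent X

/-- The deactivated set `X⁺` of `X` in the AFN. -/
def deactivated (X : Set α) : Set α :=
  {a | (∃ e ∈ X, fn.R e a) ∨ ∃ B, fn.N B a ∧ X ∩ B = ∅}

/-- `X` defends `a` in the AFN. -/
def Defends (X : Set α) (a : α) : Prop :=
  fn.Coherent (X ∪ {a}) ∧ ∀ b, fn.R b a → b ∈ fn.discardedAtt X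

def Admissible (X : Set α) : Prop := fn.StronglyCoherent X ∧ ∀ a ∈ X, fn.Defends X a

def Complete (X : Set α) : Prop := fn.Admissible X ∧ ∀ a, fn.Defends X a → a ∈ X

def Preferred (X : Set α) : Prop :=
  fn.Admissible X ∧ ∀ Y, fn.Admissible Y → X ⊆ Y → X = Y

/-- `X` is the grounded extension: the least complete extension. -/
def IsGrounded (X : Set α) : Prop := fn.Complete X ∧ ∀ Y, fn.Complete Y → X ⊆ Y

/-- Stability via completeness and the deactivated set. -/
def Stable (X : Set α) : Prop := fn.Complete X ∧ fn.deactivated X = Xᶜ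

/-- Stability via strong coherence and the discarded set. -/
def StableAtt (X : Set α) : Prop :=
  fn.StronglyCoherent X ∧ fn.discardedAtt X = Xᶜ

/-- Strong consistency of an AFN: no argument is both supported and attacked by
the same argument. -/
def StronglyConsistent : Prop :=
  ∀ a : α, {b | ∃ B, b ∈ B ∧ fn.N B a} ∩ {b | fn.R b a} = ∅

/-- The ADF corresponding to a strongly consistent AFN. -/
noncomputable def toADF : ADF α where
  L x y := fn.R x y ∨ ∃ B, x ∈ B ∧ fn.N B y
  C a P := decide (¬ ((∃ p ∈ P, fn.R p a) ∨ ∃ Z, fn.N Z a ∧ Z ∩ P = ∅))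

end AFN

/-! ### Auxiliary lemmas -/

namespace AFNAux

open Set

set_option linter.unusedSectionVars false

variable {α : Type} [Fintype α] (fn : AFN α)

def att (g : α) : Set α := {b | fn.R b g}

def Hits (g : α) (T : Set α) : Prop := ∀ Z, fn.N Z g → (Z ∩ T).Nonempty

lemma mem_par_toADF {p s : α} :
    p ∈ fn.toADF.par s ↔ (fn.R p s ∨ ∃ B, p ∈ B ∧ fn.N B s) := Iff.rfl

lemma decide_true_iff' {p : Prop} {i : Decidable p} : (@decide p i = true) ↔ p := by
  rcases i with hf | ht
  · exact ⟨fun h => Bool.noConfusion h, fun h => absurd h hf⟩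
  · exact ⟨fun _ => ht, fun _ => rfl⟩

lemma evalCond_toADF (s : α) (w : Interp α) :
    fn.toADF.evalCond s w = true ↔
      ¬ ((∃ p ∈ tset w ∩ fn.toADF.par s, fn.R p s) ∨
         ∃ Z, fn.N Z s ∧ Z ∩ (tset w ∩ fn.toADF.par s) = ∅) := by
  exact decide_true_iff'

lemma tset_mkInterp (T F : Set α) : tset (mkInterp T F) = T := by
  ext x
  simp only [tset, mkInterp, Set.mem_setOf_eq]
  by_cases h1 : x ∈ T <;> by_cases h2 : x ∈ F <;> simp [h1, h2]

lemma fset_mkInterp (T F : Set α) : fset (mkInterp T F) = F \ T := by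
  ext x
  simp only [fset, mkInterp, Set.mem_setOf_eq, Set.mem_diff]
  by_cases h1 : x ∈ T <;> by_cases h2 : x ∈ F <;> simp [h1, h2]

lemma idom_mkInterp (T F : Set α) : idom (mkInterp T F) = T ∪ F := by
  ext x
  simp only [idom, mkInterp, Set.mem_setOf_eq, Set.mem_union]
  by_cases h1 : x ∈ T <;> by_cases h2 : x ∈ F <;> simp [h1, h2]

/-- Extend `v` on `P` by the boolean function `b`. -/
noncomputable def ext (v : Interp α) (P : Set α) (b : α → Bool) : Interp α :=
  fun x => if v x ≠ none then v x else if x ∈ P then some (b x) else none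

lemma completion_ext (v : Interp α) (P : Set α) (b : α → Bool) :
    Completion v (ext v P b) (idom v ∪ P) := by
  constructor
  · ext x
    simp only [idom, ext, Set.mem_setOf_eq, Set.mem_union]
    by_cases h1 : v x = none <;> by_cases h2 : x ∈ P <;> simp [h1, h2]
  · intro x hx
    simp only [idom, Set.mem_setOf_eq] at hx
    simp [ext, hx]

lemma tset_ext_mem (v : Interp α) (P : Set α) (b : α → Bool) (x : α) :
    x ∈ tset (ext v P b) ↔ (x ∈ tset v ∨ (v x = none ∧ x ∈ P ∧ b x = true)) := by
  simp only [tset, ext, Set.mem_setOf_eq]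
  by_cases h1 : v x = none <;> by_cases h2 : x ∈ P <;> simp [h1, h2]

/-- Facts that follow from decisive-in-ness in `toADF`. -/
lemma decIn_facts {v : Interp α} {g : α} (hd : fn.toADF.DecisivelyIn v g) :
    (∀ Z, fn.N Z g → (Z ∩ tset v).Nonempty) ∧ att fn g ⊆ fset v := by
  constructor
  · intro Z hZ
    by_contra hne
    rw [Set.not_nonempty_iff_eq_empty] at hne
    have hw := hd (ext v (fn.toADF.par g) (fun _ => false))
      (completion_ext v (fn.toADF.par g) (fun _ => false))
    rw [evalCond_toADF] at hw
    apply hw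
    refine Or.inr ⟨Z, hZ, ?_⟩
    have htw : tset (ext v (fn.toADF.par g) (fun _ => false)) = tset v := by
      ext x; rw [tset_ext_mem]; simp
    rw [htw]
    apply Set.eq_empty_of_subset_empty
    intro x hx
    rw [← hne]; exact ⟨hx.1, hx.2.1⟩
  · intro b hb
    by_contra hbf
    have hbpar : b ∈ fn.toADF.par g := Or.inl hb
    set w := ext v (fn.toADF.par g) (fun x => decide (x = b)) with hwdef
    have hw := hd w (completion_ext v (fn.toADF.par g) _)
    rw [evalCond_toADF] at hw
    apply hw
    refine Or.inl ⟨b, ⟨?_, hbpar⟩, hb⟩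
    rw [hwdef, tset_ext_mem]
    by_cases hvb : v b = none
    · exact Or.inr ⟨hvb, hbpar, by simp⟩
    · left
      rcases Option.ne_none_iff_exists'.mp hvb with ⟨c, hc⟩
      cases c with
      | true => exact hc
      | false => exact absurd hc hbf

lemma pdT_eq {pd : α → Option (Interp α)} {g : α} {v : Interp α} (h : pd g = some v) :
    pdT pd g = tset v := by
  ext b
  simp only [pdT, Set.mem_setOf_eq]
  constructor
  · rintro ⟨v', hv', hb⟩; rw [h] at hv'; cases hv'; exact hb
  · intro hb; exact ⟨v, h, hb⟩

lemma pdF_eq {pd : α → Option (Interp α)} {g : α} {v : Interp α} (h : pd g = some v) :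
    pdF pd g = fset v := by
  ext b
  simp only [pdF, Set.mem_setOf_eq]
  constructor
  · rintro ⟨v', hv', hb⟩; rw [h] at hv'; cases hv'; exact hb
  · intro hb; exact ⟨v, h, hb⟩

/-- A minimal hitting set together with the attackers yields a minimal
decisively-in interpretation. -/
lemma minDecIn_mk (hcons : fn.StronglyConsistent) (g : α) (T : Set α)
    (hT : Hits fn g T) (hmin : ∀ T' ⊆ T, Hits fn g T' → T' = T) :
    fn.toADF.MinDecIn (mkInterp T (att fn g)) g ∧
      tset (mkInterp T (att fn g)) = T ∧ fset (mkInterp T (att fn g)) = att fn g := by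
  -- disjointness of T from the attackers of g
  have hdisj : ∀ t ∈ T, t ∉ att fn g := by
    intro t ht hatt
    have hnh : ¬ Hits fn g (T \ {t}) := by
      intro hh
      have h2 := hmin (T \ {t}) (Set.diff_subset) hh
      have h3 : t ∈ T \ {t} := by rw [h2]; exact ht
      exact h3.2 rfl
    simp only [Hits, not_forall] at hnh
    obtain ⟨Z, hZ, hne⟩ := hnh
    rw [Set.not_nonempty_iff_eq_empty] at hne
    obtain ⟨s, hsZ, hsT⟩ := hT Z hZ
    have hst : s = t := by
      by_contra hst
      have : s ∈ Z ∩ (T \ {t}) := ⟨hsZ, hsT, hst⟩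
      rw [hne] at this; exact this
    have : t ∈ {b | ∃ B, b ∈ B ∧ fn.N B g} ∩ {b | fn.R b g} :=
      ⟨⟨Z, hst ▸ hsZ, hZ⟩, hatt⟩
    rw [hcons g] at this; exact this
  have htset := tset_mkInterp T (att fn g)
  have hfset : fset (mkInterp T (att fn g)) = att fn g := by
    rw [fset_mkInterp]
    ext x
    constructor
    · exact fun hx => hx.1
    · intro hx; exact ⟨hx, fun hxT => hdisj x hxT hx⟩
  refine ⟨⟨?_, ?_⟩, htset, hfset⟩
  · -- decisively in
    intro w hw
    obtain ⟨hdom, hagree⟩ := hw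
    rw [evalCond_toADF]
    rintro (⟨p, ⟨hpt, hppar⟩, hpR⟩ | ⟨Z, hZ, hZe⟩)
    · -- no attacker can be true
      have hpi : p ∈ idom (mkInterp T (att fn g)) := by
        rw [idom_mkInterp]; exact Or.inr hpR
      have := hagree p hpi
      have hpv : mkInterp T (att fn g) p = some false := by
        have hpT : p ∉ T := fun hpT => hdisj p hpT hpR
        simp [mkInterp, hpT, att, hpR]
      rw [hpv] at this
      rw [tset, Set.mem_setOf_eq, this] at hpt
      exact Bool.noConfusion (Option.some.inj hpt)
    · -- every necessity set is hit
      obtain ⟨t, htZ, htT⟩ := hT Z hZ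
      have hti : t ∈ idom (mkInterp T (att fn g)) := by
        rw [idom_mkInterp]; exact Or.inl htT
      have hwt : w t = some true := by
        rw [hagree t hti]; simp [mkInterp, htT]
      have : t ∈ Z ∩ (tset w ∩ fn.toADF.par g) :=
        ⟨htZ, hwt, Or.inr ⟨Z, htZ, hZ⟩⟩
      rw [hZe] at this; exact this
  · -- minimality
    intro w hwd htsub hfsub
    obtain ⟨hhits, hatt⟩ := decIn_facts fn hwd
    rw [htset] at htsub
    rw [hfset] at hfsub ⊢
    constructor
    · rw [htset]
      exact hmin (tset w) htsub (fun Z hZ => by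
        obtain ⟨t, ht1, ht2⟩ := hhits Z hZ; exact ⟨t, ht1, ht2⟩)
    · exact Set.Subset.antisymm hfsub hatt

/-- Any set satisfying `P` contains a subset that is minimal with `P`. -/
lemma exists_min_subset (P : Set α → Prop) (S : Set α) (hS : P S) :
    ∃ T, T ⊆ S ∧ P T ∧ ∀ T' ⊆ T, P T' → T' = T := by
  obtain ⟨n, hn⟩ : ∃ n, S.ncard ≤ n := ⟨S.ncard, le_rfl⟩
  induction n generalizing S with
  | zero =>
      have hS0 : S = ∅ := by
        rw [← Set.ncard_eq_zero (Set.toFinite S)]; omega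
      refine ⟨S, subset_rfl, hS, fun T' h1 _ => ?_⟩
      rw [hS0] at h1 ⊢
      exact Set.subset_empty_iff.mp h1
  | succ n ih =>
      by_cases hmin : ∀ T' ⊆ S, P T' → T' = S
      · exact ⟨S, subset_rfl, hS, hmin⟩
      · push_neg at hmin
        obtain ⟨T', hsub, hP, hne⟩ := hmin
        have hcard : T'.ncard ≤ n := by
          have := Set.ncard_lt_ncard (hsub.ssubset_of_ne hne) (Set.toFinite S)
          omega
        obtain ⟨T, h1, h2, h3⟩ := ih T' hP hcard
        exact ⟨T, h1.trans hsub, h2, h3⟩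

/-- Everything hits `univ`. -/
lemma hits_univ (g : α) : Hits fn g Set.univ := by
  intro Z hZ
  obtain ⟨z, hz⟩ := fn.nonempty_of_N Z g hZ
  exact ⟨z, hz, trivial⟩

/-- Build a maximally sound pd-function on `univ` from a choice of hitting supports. -/
lemma maxSound_mk (hcons : fn.StronglyConsistent) (S : α → Set α)
    (hS : ∀ g, Hits fn g (S g)) :
    ∃ pd : α → Option (Interp α),
      fn.toADF.MaxSound Set.univ pd ∧
      ∀ g, ∃ v, pd g = some v ∧ tset v ⊆ S g ∧ fset v = att fn g := by
  have hch : ∀ g, ∃ T, T ⊆ S g ∧ Hits fn g T ∧ ∀ T' ⊆ T, Hits fn g T' → T' = T :=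
    fun g => exists_min_subset (Hits fn g) (S g) (hS g)
  choose T hT1 hT2 hT3 using hch
  refine ⟨fun g => some (mkInterp (T g) (att fn g)), ⟨?_, ?_⟩, ?_⟩
  · -- PDFun
    intro g _
    constructor
    · intro v hv
      cases hv
      obtain ⟨hmd, ht, hf⟩ := minDecIn_mk fn hcons g (T g) (hT2 g) (hT3 g)
      exact ⟨hmd, by rw [ht]; exact Set.subset_univ _⟩
    · intro hnone; exact absurd hnone (Option.some_ne_none _)
  · -- maximality (trivial: pd is total)
    rintro ⟨X'', pd', _, _, hss, hsub, _⟩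
    have : soundDom Set.univ (fun g => some (mkInterp (T g) (att fn g))) = Set.univ := by
      ext x
      simp [soundDom]
    rw [this] at hss
    exact hss.2 hsub
  · intro g
    obtain ⟨hmd, ht, hf⟩ := minDecIn_mk fn hcons g (T g) (hT2 g) (hT3 g)
    exact ⟨mkInterp (T g) (att fn g), rfl, by rw [ht]; exact hT1 g, hf⟩

/-! ### Powerful sequences, ranks and layered lists -/

lemma powerfulSeq_take {C : Set α} {G : List α} {a : α} (hp : fn.PowerfulSeq C G a)
    (i : ℕ) (hi : i < G.length) :
    fn.PowerfulSeq C (G.take (i+1)) (G.get ⟨i, hi⟩) := by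
  obtain ⟨hne, hmem, hlast, hhit⟩ := hp
  have hlen : (G.take (i+1)).length = i+1 := by simp; omega
  refine ⟨?_, ?_, ?_, ?_⟩
  · intro h0; rw [h0] at hlen; simp at hlen
  · intro b hb; exact hmem b (List.take_subset _ _ hb)
  · rw [List.getLast?_eq_getElem?, hlen]
    simp only [Nat.add_sub_cancel]
    rw [List.getElem?_eq_getElem (by rw [hlen]; omega)]
    simp only [List.getElem_take, List.get_eq_getElem]
  · intro i' h' B hB
    have hi' : i' < G.length := by rw [hlen] at h'; omega
    have hget : (G.take (i+1)).get ⟨i', h'⟩ = G.get ⟨i', hi'⟩ := by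
      simp only [List.get_eq_getElem, List.getElem_take]
    rw [hget] at hB
    obtain ⟨j, hj, hji, hjB⟩ := hhit i' hi' B hB
    have hj' : j < (G.take (i+1)).length := by rw [hlen] at h' ⊢; omega
    refine ⟨j, hj', hji, ?_⟩
    simpa only [List.get_eq_getElem, List.getElem_take] using hjB

noncomputable def rank (C : Set α) (c : α) : ℕ :=
  sInf {n | ∃ G, fn.PowerfulSeq C G c ∧ G.length = n}

lemma rank_spec {C : Set α} {c : α} (hC : fn.Coherent C) (hc : c ∈ C) :
    ∃ G, fn.PowerfulSeq C G c ∧ G.length = rank fn C c := by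
  have hne : {n | ∃ G, fn.PowerfulSeq C G c ∧ G.length = n}.Nonempty := by
    obtain ⟨_, G, hG⟩ := hC c hc
    exact ⟨G.length, G, hG, rfl⟩
  exact Nat.sInf_mem hne

lemma rank_le {C : Set α} {c : α} {G : List α} (hG : fn.PowerfulSeq C G c) :
    rank fn C c ≤ G.length :=
  Nat.sInf_le ⟨G, hG, rfl⟩

lemma one_le_rank {C : Set α} {c : α} (hC : fn.Coherent C) (hc : c ∈ C) :
    1 ≤ rank fn C c := by
  obtain ⟨G, hG, hlen⟩ := rank_spec fn hC hc
  have hne := hG.1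
  rw [← hlen]
  cases G with
  | nil => exact absurd rfl hne
  | cons x l => simp

lemma rank_lt {C : Set α} {c : α} (hC : fn.Coherent C) (hc : c ∈ C)
    {Z : Set α} (hZ : fn.N Z c) :
    ∃ b, b ∈ C ∧ b ∈ Z ∧ rank fn C b < rank fn C c := by
  obtain ⟨G, hG, hlen⟩ := rank_spec fn hC hc
  have hne := hG.1
  have hlpos : 0 < G.length := List.length_pos_iff.mpr hne
  have hlast : G.get ⟨G.length - 1, by omega⟩ = c := by
    have h2 := hG.2.2.1
    rw [List.getLast?_eq_getElem?] at h2
    rw [List.getElem?_eq_getElem (by omega)] at h2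
    exact Option.some.inj h2
  obtain ⟨j, hj, hji, hjB⟩ := hG.2.2.2 (G.length - 1) (by omega) Z (by rw [hlast]; exact hZ)
  refine ⟨G.get ⟨j, hj⟩, hG.2.1 _ (List.get_mem G ⟨j, hj⟩), hjB, ?_⟩
  have h3 := rank_le fn (powerfulSeq_take fn hG j hj)
  have hlen2 : (G.take (j+1)).length = j + 1 := by simp; omega
  omega

lemma exists_layers {C : Set α} (hC : fn.Coherent C) (n : ℕ) :
    ∃ G : List α, G.Nodup ∧ (∀ b ∈ G, b ∈ C ∧ rank fn C b ≤ n) ∧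
      (∀ c ∈ C, rank fn C c ≤ n → c ∈ G) ∧
      (∀ (i : ℕ) (h : i < G.length) (Z : Set α), fn.N Z (G.get ⟨i, h⟩) →
        ∃ (j : ℕ) (hj : j < G.length), j < i ∧ G.get ⟨j, hj⟩ ∈ Z) := by
  induction n with
  | zero =>
      refine ⟨[], List.nodup_nil, by simp, ?_, by simp⟩
      intro c hc hr
      exact absurd hr (by have := one_le_rank fn hC hc; omega)
  | succ n ih =>
      obtain ⟨G, hnd, hmem, hcov, hgood⟩ := ih
      set S : Set α := {c | c ∈ C ∧ rank fn C c = n+1 ∧ c ∉ G} with hSdef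
      set L := (Set.toFinite S).toFinset.toList with hLdef
      have hLmem : ∀ b, b ∈ L ↔ b ∈ S := by
        intro b; rw [hLdef, Finset.mem_toList, Set.Finite.mem_toFinset]
      refine ⟨G ++ L, ?_, ?_, ?_, ?_⟩
      · rw [List.nodup_append]
        exact ⟨hnd, Finset.nodup_toList _, fun x hx y hy hxy => ((hLmem y).mp hy).2.2 (hxy ▸ hx)⟩
      · intro b hb
        rcases List.mem_append.mp hb with hcase | hcase
        · obtain ⟨h1, h2⟩ := hmem b hcase; exact ⟨h1, by omega⟩
        · obtain ⟨h1, h2, _⟩ := (hLmem b).mp hcase; exact ⟨h1, by omega⟩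
      · intro c hc hr
        rcases Nat.lt_or_ge (rank fn C c) (n+1) with hcase | hcase
        · exact List.mem_append.mpr (Or.inl (hcov c hc (by omega)))
        · have hr1 : rank fn C c = n+1 := by omega
          by_cases hg : c ∈ G
          · exact List.mem_append.mpr (Or.inl hg)
          · exact List.mem_append.mpr (Or.inr ((hLmem c).mpr ⟨hc, hr1, hg⟩))
      · intro i h Z hZ
        have hlen : (G ++ L).length = G.length + L.length := by simp
        rcases Nat.lt_or_ge i G.length with hi | hi
        · have hget : (G ++ L).get ⟨i, h⟩ = G.get ⟨i, hi⟩ := by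
            simp only [List.get_eq_getElem]; exact List.getElem_append_left hi
          rw [hget] at hZ
          obtain ⟨j, hj, hji, hjZ⟩ := hgood i hi Z hZ
          refine ⟨j, by rw [hlen]; omega, hji, ?_⟩
          have hg2 : (G ++ L).get ⟨j, by rw [hlen]; omega⟩ = G.get ⟨j, hj⟩ := by
            simp only [List.get_eq_getElem]; exact List.getElem_append_left hj
          rw [hg2]; exact hjZ
        · have hil : i - G.length < L.length := by rw [hlen] at h; omega
          have hget : (G ++ L).get ⟨i, h⟩ = L.get ⟨i - G.length, hil⟩ := by
            simp only [List.get_eq_getElem]; exact List.getElem_append_right hi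
          have hmemL : (G ++ L).get ⟨i, h⟩ ∈ L := by
            rw [hget]; exact List.get_mem L _
          obtain ⟨hgC, hgr, _⟩ := (hLmem _).mp hmemL
          obtain ⟨b, hbC, hbZ, hbr⟩ := rank_lt fn hC hgC hZ
          have hbG : b ∈ G := hcov b hbC (by omega)
          obtain ⟨⟨j, hj⟩, hbj⟩ := List.mem_iff_get.mp hbG
          refine ⟨j, by rw [hlen]; omega, by omega, ?_⟩
          have hg2 : (G ++ L).get ⟨j, by rw [hlen]; omega⟩ = G.get ⟨j, hj⟩ := by
            simp only [List.get_eq_getElem]; exact List.getElem_append_left hj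
          rw [hg2, hbj]; exact hbZ

lemma exists_good_list {C : Set α} (hC : fn.Coherent C) {a : α} (ha : a ∈ C) :
    ∃ G : List α, G.Nodup ∧ (∀ b ∈ G, b ∈ C) ∧ G.getLast? = some a ∧
      (∀ (i : ℕ) (h : i < G.length) (Z : Set α), fn.N Z (G.get ⟨i, h⟩) →
        ∃ (j : ℕ) (hj : j < G.length), j < i ∧ G.get ⟨j, hj⟩ ∈ Z) := by
  obtain ⟨G, hnd, hmem, hcov, hgood⟩ := exists_layers fn hC (rank fn C a)
  have haG : a ∈ G := hcov a ha le_rfl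
  obtain ⟨⟨i, hi⟩, hai⟩ := List.mem_iff_get.mp haG
  have hlen : (G.take (i+1)).length = i+1 := by simp; omega
  refine ⟨G.take (i+1), hnd.sublist (List.take_sublist _ _), ?_, ?_, ?_⟩
  · intro b hb; exact (hmem b (List.take_subset _ _ hb)).1
  · rw [List.getLast?_eq_getElem?, hlen]
    simp only [Nat.add_sub_cancel]
    rw [List.getElem?_eq_getElem (by rw [hlen]; omega)]
    simp only [List.getElem_take]
    simp only [List.get_eq_getElem] at hai
    rw [hai]
  · intro i' h' Z hZ
    have hi' : i' < G.length := by rw [hlen] at h'; omega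
    have hget : (G.take (i+1)).get ⟨i', h'⟩ = G.get ⟨i', hi'⟩ := by
      simp only [List.get_eq_getElem, List.getElem_take]
    rw [hget] at hZ
    obtain ⟨j, hj, hji, hjZ⟩ := hgood i' hi' Z hZ
    refine ⟨j, by rw [hlen] at h' ⊢; omega, hji, ?_⟩
    simpa only [List.get_eq_getElem, List.getElem_take] using hjZ

end AFNAux

end Dialectical

open Dialectical in
/-- for strongly coherent `X`, the AFN discarded set `X^att` coincides
with the acyclic discarded set `X^{a+}` of the corresponding ADF. -/
theorem afn_toADF_discarded
    {α : Type} [Fintype α] (fn : AFN α) (h : fn.StronglyConsistent)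
    (X : Set α) (hsc : fn.StronglyCoherent X) :
    fn.discardedAtt X = fn.toADF.aDiscarded X := by
  classical
  ext a
  simp only [AFN.discardedAtt, ADF.aDiscarded, Set.mem_setOf_eq]
  constructor
  · -- X^att ⊆ X^{a+}
    intro ha G B hev
    have hev' : ∃ pd, fn.toADF.MaxSound Set.univ pd ∧
        IsPAEvalWith pd Set.univ a ∅ G B := hev
    obtain ⟨pd, hms, h1, hnd, h3, h4, h5, h6, h7, h8, h9, h10, h11, h11b, h12⟩ := hev'
    have hGne : G ≠ [] := fun h0 => Set.notMem_empty a (h8 h0)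
    have hpd : ∀ g ∈ G, ∃ v, pd g = some v ∧ fn.toADF.DecisivelyIn v g := by
      intro g hg
      rcases hv : pd g with _ | v
      · exact absurd hv (h7 g hg)
      · exact ⟨v, rfl, ((hms.1 g (Set.mem_univ g)).1 v hv).1.1⟩
    have hcoh : fn.Coherent {c | c ∈ G} := by
      intro g hg
      obtain ⟨⟨i, hi⟩, hgi⟩ := List.mem_iff_get.mp hg
      have hlen : (G.take (i+1)).length = i+1 := by simp; omega
      refine ⟨hg, G.take (i+1), ?_, ?_, ?_, ?_⟩
      · intro h0; rw [h0] at hlen; simp at hlen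
      · intro b hb; exact List.take_subset _ _ hb
      · rw [List.getLast?_eq_getElem?, hlen]
        simp only [Nat.add_sub_cancel]
        rw [List.getElem?_eq_getElem (by rw [hlen]; omega)]
        simp only [List.getElem_take]
        simp only [List.get_eq_getElem] at hgi
        rw [hgi]
      · intro i' h' Z hZ
        have hi' : i' < G.length := by rw [hlen] at h'; omega
        have hget : (G.take (i+1)).get ⟨i', h'⟩ = G.get ⟨i', hi'⟩ := by
          simp only [List.get_eq_getElem, List.getElem_take]
        rw [hget] at hZ
        obtain ⟨v, hveq, hvdec⟩ := hpd _ (List.get_mem G ⟨i', hi'⟩)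
        obtain ⟨t, htZ, htv⟩ := (AFNAux.decIn_facts fn hvdec).1 Z hZ
        have htT : t ∈ pdT pd (G.get ⟨i', hi'⟩) := by
          rw [AFNAux.pdT_eq hveq]; exact htv
        rcases h10 i' hi' htT with hF | ⟨j, hj, hji, hjt⟩
        · exact absurd hF (Set.notMem_empty t)
        · refine ⟨j, by rw [hlen] at h' ⊢; omega, hji, ?_⟩
          have hg2 : (G.take (i+1)).get ⟨j, by rw [hlen] at h' ⊢; omega⟩ = G.get ⟨j, hj⟩ := by
            simp only [List.get_eq_getElem, List.getElem_take]
          rw [hg2, hjt]; exact htZ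
    have haG : a ∈ G := by
      have h9' := h9 hGne
      rw [List.getLast?_eq_getElem?] at h9'
      exact List.mem_of_getElem? h9'
    obtain ⟨c, hcG, e, heX, heR⟩ := ha {c | c ∈ G} hcoh haG
    obtain ⟨v, hveq, hvdec⟩ := hpd c hcG
    have heB : e ∈ B := by
      rw [h12]
      refine Set.mem_union_right _ (Set.mem_biUnion hcG ?_)
      rw [AFNAux.pdF_eq hveq]
      exact (AFNAux.decIn_facts fn hvdec).2 heR
    exact ⟨e, heB, heX⟩
  · -- X^{a+} ⊆ X^att
    intro ha C hC haC
    by_contra hno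
    push_neg at hno
    obtain ⟨G, hnd, hmemC, hlast, hgood⟩ := AFNAux.exists_good_list fn hC haC
    have hGne : G ≠ [] := fun h0 => by rw [h0] at hlast; simp at hlast
    have hinj : Function.Injective G.get := List.nodup_iff_injective_get.mp hnd
    have hidx : ∀ g, g ∈ G → ∃ i : Fin G.length, G.get i = g :=
      fun g hg => List.mem_iff_get.mp hg
    choose idx hidxeq using hidx
    set Sfun : α → Set α := fun g =>
      if hg : g ∈ G then
        {b | ∃ (j : ℕ) (hj : j < G.length), j < (idx g hg).1 ∧ G.get ⟨j, hj⟩ = b}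
      else Set.univ with hSdef
    have hS : ∀ g, AFNAux.Hits fn g (Sfun g) := by
      intro g
      by_cases hg : g ∈ G
      · intro Z hZ
        have hZ' : fn.N Z (G.get (idx g hg)) := by rw [hidxeq g hg]; exact hZ
        obtain ⟨j, hj, hji, hjZ⟩ := hgood (idx g hg).1 (idx g hg).2 Z hZ'
        refine ⟨G.get ⟨j, hj⟩, hjZ, ?_⟩
        rw [hSdef]; simp only [dif_pos hg]
        exact ⟨j, hj, hji, rfl⟩
      · rw [hSdef]; simp only [dif_neg hg]
        exact AFNAux.hits_univ fn g
    obtain ⟨pd, hms, hval⟩ := AFNAux.maxSound_mk fn h Sfun hS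
    set B : Set α := (⋃ b ∈ (∅ : Set α), pdF pd b) ∪ ⋃ b ∈ {c | c ∈ G}, pdF pd b with hBdef
    have hev : fn.toADF.AcyclicEval Set.univ a G B := by
      refine ⟨pd, hms, ?_, hnd, Set.mem_univ a, Set.empty_subset _,
        fun b _ => Set.mem_univ b, ?_, ?_, fun h0 => absurd h0 hGne, fun _ => hlast,
        ?_, ?_, ?_, hBdef⟩
      · intro b _ hb; exact Set.notMem_empty b hb
      · intro b hb; exact absurd hb (Set.notMem_empty b)
      · intro g hg
        obtain ⟨v, hveq, _, _⟩ := hval g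
        rw [hveq]; exact Option.some_ne_none _
      · intro i hi
        have hgmem : G.get ⟨i, hi⟩ ∈ G := List.get_mem G ⟨i, hi⟩
        obtain ⟨v, hveq, htsub, _⟩ := hval (G.get ⟨i, hi⟩)
        rw [AFNAux.pdT_eq hveq]
        intro b hb
        have hb' := htsub hb
        rw [hSdef] at hb'
        simp only [dif_pos hgmem] at hb'
        obtain ⟨j, hj, hji, hjb⟩ := hb'
        have hidxi : idx (G.get ⟨i, hi⟩) hgmem = ⟨i, hi⟩ :=
          hinj (hidxeq (G.get ⟨i, hi⟩) hgmem)
        rw [hidxi] at hji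
        exact Set.mem_union_right _ ⟨j, hj, hji, hjb⟩
      · intro b hb; exact absurd hb (Set.notMem_empty b)
      · intro b hb; exact absurd hb (Set.notMem_empty b)
    obtain ⟨e, heB, heX⟩ := ha G B hev
    rw [hBdef] at heB
    rcases heB with h0 | h1
    · simp at h0
    · obtain ⟨c, hcG, hce⟩ := Set.mem_iUnion₂.mp h1
      obtain ⟨v, hveq, _, hfv⟩ := hval c
      rw [AFNAux.pdF_eq hveq, hfv] at hce
      exact hno c (hmemC c hcG) e heX hce
end

section
/- Let (A, R, N) be a strongly consistent AFN and ADF^FN its corresponding ADF, and let X ⊆ A be strongly coherent in (A, R, N) (and thus pd-acyclic conflict-free in ADF^FN). Then X defends an argument a ∈ A in (A, R, N) if and only if a is decisively in w.r.t. the acyclic range v_X^a of X in ADF^FN. -/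
open Classical

universe u

namespace AFNADF

open Dialectical

variable {α : Type} [Fintype α] (fn : AFN α)

set_option linter.unusedSectionVars false

/-- Core validity predicate of a sequence: every necessity set of every element
is met by an earlier element. -/
def Valid (fn : AFN α) (G : List α) : Prop :=
  ∀ (i : ℕ) (h : i < G.length) (Z : Set α), fn.N Z (G[i]'h) →
    ∃ (j : ℕ) (hj : j < G.length), j < i ∧ (G[j]'hj) ∈ Z

lemma powerfulSeq_iff (X : Set α) (G : List α) (a : α) :
    fn.PowerfulSeq X G a ↔
      (G ≠ [] ∧ (∀ b ∈ G, b ∈ X) ∧ G.getLast? = some a ∧ Valid fn G) := by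
  unfold AFN.PowerfulSeq Valid
  simp only [List.get_eq_getElem]

lemma mem_of_getLast? {l : List α} {a : α} (h : l.getLast? = some a) : a ∈ l := by
  have := List.dropLast_append_getLast? a h
  rw [← this]; simp

lemma valid_nil : Valid fn [] := fun i h => by simp at h

lemma valid_of_append_left {G H : List α} (h : Valid fn (G ++ H)) : Valid fn G := by
  intro i hi Z hZ
  have hi' : i < (G ++ H).length := by simp; omega
  obtain ⟨j, hj, hji, hmem⟩ := h i hi' Z (by rwa [List.getElem_append_left hi])
  have hjG : j < G.length := lt_trans hji hi
  exact ⟨j, hjG, hji, by rwa [List.getElem_append_left hjG] at hmem⟩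

lemma valid_append {G H : List α} (hG : Valid fn G) (hH : Valid fn H) :
    Valid fn (G ++ H) := by
  intro i hi Z hZ
  have hlen : i < G.length + H.length := by simpa using hi
  by_cases hiG : i < G.length
  · rw [List.getElem_append_left hiG] at hZ
    obtain ⟨j, hj, hji, hmem⟩ := hG i hiG Z hZ
    exact ⟨j, by simp; omega, hji, by rw [List.getElem_append_left hj]; exact hmem⟩
  · push_neg at hiG
    rw [List.getElem_append_right hiG] at hZ
    obtain ⟨j, hj, hji, hmem⟩ := hH (i - G.length) (by omega) Z hZ
    refine ⟨G.length + j, by simp; omega, by omega, ?_⟩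
    rw [List.getElem_append_right (by omega : G.length ≤ G.length + j)]
    simpa using hmem

lemma valid_take {G : List α} (hG : Valid fn G) (n : ℕ) : Valid fn (G.take n) := by
  intro i hi Z hZ
  have hin : i < n := by simp at hi; omega
  have hi' : i < G.length := by simp at hi; omega
  rw [List.getElem_take] at hZ
  obtain ⟨j, hj, hji, hmem⟩ := hG i hi' Z hZ
  refine ⟨j, by simp; omega, hji, ?_⟩
  rw [List.getElem_take]; exact hmem

lemma valid_concat {G : List α} {x : α} (hG : Valid fn G)
    (hx : ∀ Z, fn.N Z x → ∃ y ∈ Z, y ∈ G) : Valid fn (G ++ [x]) := by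
  intro i hi Z hZ
  have hlen : i < G.length + 1 := by simpa using hi
  by_cases hiG : i < G.length
  · rw [List.getElem_append_left hiG] at hZ
    obtain ⟨j, hj, hji, hmem⟩ := hG i hiG Z hZ
    exact ⟨j, by simp; omega, hji, by rw [List.getElem_append_left hj]; exact hmem⟩
  · have hieq : i = G.length := by omega
    rw [List.getElem_concat_length hieq hi] at hZ
    obtain ⟨y, hyZ, hyG⟩ := hx Z hZ
    obtain ⟨j, hj, hjy⟩ := List.mem_iff_getElem.mp hyG
    refine ⟨j, by simp; omega, by omega, ?_⟩
    rw [List.getElem_append_left hj, hjy]; exact hyZ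

lemma exists_nodup_valid : ∀ (H : List α), Valid fn H →
    ∃ G : List α, G.Nodup ∧ Valid fn G ∧ (∀ x, x ∈ G ↔ x ∈ H) ∧
      ∀ (L : List α) (b : α), H = L ++ [b] → b ∉ L → G.getLast? = some b := by
  intro H
  induction H using List.reverseRecOn with
  | nil =>
    intro _
    exact ⟨[], by simp, valid_nil fn, by simp, by intro L b hLb; simp at hLb⟩
  | append_singleton H₀ x IH =>
    intro hv
    obtain ⟨G₀, hnd, hval, hmem, hlast⟩ := IH (valid_of_append_left fn hv)
    by_cases hx : x ∈ H₀
    · refine ⟨G₀, hnd, hval, ?_, ?_⟩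
      · intro y; rw [hmem]
        simp only [List.mem_append, List.mem_singleton]
        constructor
        · exact Or.inl
        · rintro (h | rfl)
          · exact h
          · exact hx
      · intro L b hEq hbL
        obtain ⟨hL, hxb⟩ := List.append_inj' hEq (by simp)
        simp only [List.cons.injEq] at hxb
        exact absurd (hL ▸ (hxb.1 ▸ hx)) hbL
    · have hxG : x ∉ G₀ := fun hh => hx ((hmem x).mp hh)
      refine ⟨G₀ ++ [x], by simp [List.nodup_append, hnd, hxG]; rintro c hc rfl; exact hxG hc, ?_, ?_, ?_⟩
      · refine valid_concat fn hval ?_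
        intro Z hZ
        have hxe : (H₀ ++ [x])[H₀.length]'(by simp) = x :=
          List.getElem_concat_length rfl _
        obtain ⟨j, hj, hji, hmemZ⟩ := hv H₀.length (by simp) Z (by rw [hxe]; exact hZ)
        have hjH : j < H₀.length := hji
        refine ⟨(H₀ ++ [x])[j]'hj, hmemZ, ?_⟩
        rw [List.getElem_append_left hjH]
        exact (hmem _).mpr (List.getElem_mem hjH)
      · intro y; simp [hmem y]
      · intro L b hEq hbL
        obtain ⟨hL, hxb⟩ := List.append_inj' hEq (by simp)
        simp only [List.cons.injEq] at hxb
        rw [hxb.1]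
        exact List.getLast?_concat

lemma coherent_cover {X : Set α} (hco : fn.Coherent X) :
    ∃ G : List α, Valid fn G ∧ (∀ x ∈ G, x ∈ X) ∧ ∀ x ∈ X, x ∈ G := by
  have key : ∀ s : Finset α, ∃ G : List α, Valid fn G ∧ (∀ x ∈ G, x ∈ X) ∧
      ∀ x ∈ s, x ∈ X → x ∈ G := by
    intro s
    induction s using Finset.induction_on with
    | empty => exact ⟨[], valid_nil fn, by simp, by simp⟩
    | @insert a s ha IH =>
      obtain ⟨G₀, hval, hmemX, hcov⟩ := IH
      by_cases haX : a ∈ X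
      · obtain ⟨-, H, hps⟩ := hco a haX
        rw [powerfulSeq_iff] at hps
        obtain ⟨hHne, hHX, hHlast, hHval⟩ := hps
        refine ⟨G₀ ++ H, valid_append fn hval hHval, ?_, ?_⟩
        · intro y hy
          rcases List.mem_append.mp hy with h' | h'
          · exact hmemX y h'
          · exact hHX y h'
        · intro y hy hyX
          rcases Finset.mem_insert.mp hy with rfl | h'
          · exact List.mem_append.mpr (Or.inr (mem_of_getLast? hHlast))
          · exact List.mem_append.mpr (Or.inl (hcov y h' hyX))
      · refine ⟨G₀, hval, hmemX, ?_⟩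
        intro y hy hyX
        rcases Finset.mem_insert.mp hy with rfl | h'
        · exact absurd hyX haX
        · exact hcov y h' hyX
  obtain ⟨G, h1, h2, h3⟩ := key Finset.univ
  exact ⟨G, h1, h2, fun x hx => h3 x (Finset.mem_univ x) hx⟩

lemma mem_par_iff (s p : α) :
    p ∈ fn.toADF.par s ↔ (fn.R p s ∨ ∃ B, p ∈ B ∧ fn.N B s) := Iff.rfl

lemma evalCond_true_iff (s : α) (w : Interp α) :
    fn.toADF.evalCond s w = true ↔
      ((∀ p ∈ tset w ∩ fn.toADF.par s, ¬ fn.R p s) ∧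
        ∀ Z, fn.N Z s → (Z ∩ (tset w ∩ fn.toADF.par s)).Nonempty) := by
  unfold ADF.evalCond AFN.toADF
  simp only [decide_eq_true_eq]
  constructor
  · intro hns
    push_neg at hns
    exact hns
  · intro hns
    push_neg
    exact hns

noncomputable def completeBy (v : Interp α) (S : Set α) (g : α → Bool) : Interp α :=
  fun c => if v c ≠ none then v c else if c ∈ S then some (g c) else none

lemma completeBy_completion (v : Interp α) (S : Set α) (g : α → Bool) :
    Completion v (completeBy v S g) (idom v ∪ S) := by
  constructor
  · ext c
    simp only [idom, completeBy, Set.mem_setOf_eq, Set.mem_union]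
    by_cases h : v c = none
    · simp only [h, ne_eq, not_true_eq_false, if_false]
      by_cases hS : c ∈ S <;> simp [hS, h]
    · simp [h]
  · intro a ha
    simp only [idom, Set.mem_setOf_eq] at ha
    simp [completeBy, ha]

lemma decisivelyIn_iff (v : Interp α) (s : α) :
    fn.toADF.DecisivelyIn v s ↔
      ((∀ b, fn.R b s → v b = some false) ∧
        ∀ Z, fn.N Z s → ∃ z ∈ Z, v z = some true) := by
  constructor
  · intro hd
    constructor
    · intro b hb
      by_contra hvb
      have hpar : b ∈ fn.toADF.par s := Or.inl hb
      have hc := hd (completeBy v (fn.toADF.par s) fun _ => true)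
        (completeBy_completion v _ _)
      rw [evalCond_true_iff] at hc
      refine hc.1 b ⟨?_, hpar⟩ hb
      show completeBy v (fn.toADF.par s) (fun _ => true) b = some true
      unfold completeBy
      by_cases hbn : v b = none
      · simp [hbn, hpar]
      · have hvt : v b = some true := by
          cases hvb' : v b with
          | none => exact absurd hvb' hbn
          | some bb =>
            cases bb with
            | true => rfl
            | false => exact absurd hvb' hvb
        simp [hbn, hvt]
    · intro Z hZ
      by_contra hz
      push_neg at hz
      have hc := hd (completeBy v (fn.toADF.par s) fun _ => false)
        (completeBy_completion v _ _)
      rw [evalCond_true_iff] at hc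
      obtain ⟨z, hz1, hz2, -⟩ := hc.2 Z hZ
      have h2 : completeBy v (fn.toADF.par s) (fun _ => false) z = some true := hz2
      have hvz : v z = some true := by
        unfold completeBy at h2
        by_cases hzn : v z = none
        · simp only [hzn, ne_eq, not_true_eq_false, if_false] at h2
          split_ifs at h2 <;> simp_all
        · simpa [hzn] using h2
      exact hz z hz1 hvz
  · rintro ⟨h1, h2⟩ w hw
    rw [evalCond_true_iff]
    constructor
    · rintro p ⟨hpt, hppar⟩ hR
      have hvp := h1 p hR
      have hwp : w p = v p := hw.2 p (by simp [idom, hvp])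
      have : w p = some true := hpt
      rw [hwp, hvp] at this
      exact absurd this (by simp)
    · intro Z hZ
      obtain ⟨z, hzZ, hzv⟩ := h2 Z hZ
      have hwz : w z = some true := by
        rw [hw.2 z (by simp [idom, hzv])]; exact hzv
      exact ⟨z, hzZ, hwz, Or.inr ⟨Z, hzZ, hZ⟩⟩

lemma exists_minDecIn (h : fn.StronglyConsistent) (x : α) (S : Set α)
    (hS : ∀ Z, fn.N Z x → (Z ∩ S).Nonempty) :
    ∃ v : Interp α, fn.toADF.MinDecIn v x ∧ tset v ⊆ S ∧ fset v = {e | fn.R e x} := by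
  obtain ⟨T, ⟨hTS, hTh⟩, hmin⟩ :=
    Set.Finite.exists_minimalFor id
      {T : Set α | T ⊆ S ∧ ∀ Z, fn.N Z x → (Z ∩ T).Nonempty}
      (Set.toFinite _) ⟨S, subset_rfl, hS⟩
  have hminimal : ∀ T' ⊆ T, (∀ Z, fn.N Z x → (Z ∩ T').Nonempty) → T' = T := by
    intro T' hsub hhit
    exact Set.Subset.antisymm hsub (hmin ⟨hsub.trans hTS, hhit⟩ hsub)
  have hTsup : ∀ t ∈ T, ∃ Z, fn.N Z x ∧ t ∈ Z := by
    intro t ht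
    by_contra hno
    push_neg at hno
    have hdiff : T \ {t} = T := by
      refine hminimal (T \ {t}) Set.diff_subset ?_
      intro Z hZ
      obtain ⟨z, hz1, hz2⟩ := hTh Z hZ
      refine ⟨z, hz1, hz2, ?_⟩
      simp only [Set.mem_singleton_iff]
      rintro rfl
      exact hno Z hZ hz1
    have : t ∈ T \ {t} := hdiff.symm ▸ ht
    exact this.2 rfl
  have hTnotR : ∀ t ∈ T, ¬ fn.R t x := by
    intro t ht hR
    obtain ⟨Z, hZ, htZ⟩ := hTsup t ht
    have hmem : t ∈ ({b | ∃ B, b ∈ B ∧ fn.N B x} ∩ {b | fn.R b x} : Set α) :=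
      ⟨⟨Z, htZ, hZ⟩, hR⟩
    rw [h x] at hmem
    exact hmem
  set v : Interp α :=
    fun c => if c ∈ T then some true else if fn.R c x then some false else none with hv
  have htset : tset v = T := by
    ext c
    simp only [tset, Set.mem_setOf_eq, hv]
    split_ifs with h1 h2 <;> simp [h1]
  have hfset : fset v = {e | fn.R e x} := by
    ext c
    simp only [fset, Set.mem_setOf_eq, hv]
    split_ifs with h1 h2 <;> simp_all [hTnotR c]
  have hdec : fn.toADF.DecisivelyIn v x := by
    rw [decisivelyIn_iff]
    constructor
    · intro b hb
      have hbT : b ∉ T := fun hbT => hTnotR b hbT hb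
      simp [hv, hbT, hb]
    · intro Z hZ
      obtain ⟨z, hz1, hz2⟩ := hTh Z hZ
      exact ⟨z, hz1, by simp [hv, hz2]⟩
  refine ⟨v, ⟨hdec, ?_⟩, by rw [htset]; exact hTS, hfset⟩
  intro w hw htw hfw
  rw [decisivelyIn_iff] at hw
  have hfw' : fset w = fset v := by
    refine Set.Subset.antisymm hfw ?_
    rw [hfset]
    intro e he
    exact hw.1 e he
  have htw' : tset w = tset v := by
    rw [htset] at htw ⊢
    refine hminimal (tset w) htw ?_
    intro Z hZ
    obtain ⟨z, hz1, hz2⟩ := hw.2 Z hZ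
    exact ⟨z, hz1, hz2⟩
  exact ⟨htw', hfw'⟩

lemma pdT_eq {pd : α → Option (Interp α)} {c : α} {v : Interp α} (h : pd c = some v) :
    pdT pd c = tset v := by
  ext y; simp [pdT, h]

lemma pdF_eq {pd : α → Option (Interp α)} {c : α} {v : Interp α} (h : pd c = some v) :
    pdF pd c = fset v := by
  ext y; simp [pdF, h]

lemma coherent_union_iff {X : Set α} (hsc : fn.StronglyCoherent X) (a : α) :
    fn.Coherent (X ∪ {a}) ↔ ∀ Z, fn.N Z a → (Z ∩ X).Nonempty := by
  constructor
  · intro hco Z hZ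
    obtain ⟨-, H, hps⟩ := hco a (Or.inr rfl)
    rw [powerfulSeq_iff] at hps
    obtain ⟨hne, hmem, hlast, hval⟩ := hps
    have haH : a ∈ H := mem_of_getLast? hlast
    have hPex : ∃ i, ∃ h : i < H.length, H[i]'h = a := List.mem_iff_getElem.mp haH
    obtain ⟨hi₀, hi₀a⟩ := Nat.find_spec hPex
    obtain ⟨j, hj, hji, hmemZ⟩ := hval (Nat.find hPex) hi₀ Z (by rw [hi₀a]; exact hZ)
    have hja : H[j]'hj ≠ a := fun hEq => Nat.find_min hPex hji ⟨hj, hEq⟩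
    have hjX : H[j]'hj ∈ X := by
      rcases hmem _ (List.getElem_mem hj) with h' | h'
      · exact h'
      · exact absurd h' hja
    exact ⟨_, hmemZ, hjX⟩
  · intro hZX x hx
    rcases hx with hxX | hxa
    · obtain ⟨-, H, hps⟩ := hsc.2 x hxX
      rw [powerfulSeq_iff] at hps
      refine ⟨Or.inl hxX, H, ?_⟩
      rw [powerfulSeq_iff]
      exact ⟨hps.1, fun b hb => Or.inl (hps.2.1 b hb), hps.2.2⟩
    · have hxa' : x = a := hxa
      subst hxa'
      obtain ⟨G, hval, hmemX, hcov⟩ := coherent_cover fn hsc.2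
      refine ⟨Or.inr rfl, G ++ [x], ?_⟩
      rw [powerfulSeq_iff]
      refine ⟨by simp, ?_, List.getLast?_concat, valid_concat fn hval ?_⟩
      · intro y hy
        rcases List.mem_append.mp hy with h' | h'
        · exact Or.inl (hmemX y h')
        · simp only [List.mem_singleton] at h'
          subst h'
          exact Or.inr rfl
      · intro Z hZ
        obtain ⟨z, hz1, hz2⟩ := hZX Z hZ
        exact ⟨z, hz1, hcov z hz2⟩

lemma mem_discardedAtt_iff (h : fn.StronglyConsistent) {X : Set α}
    (hsc : fn.StronglyCoherent X) (b : α) :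
    b ∈ fn.discardedAtt X ↔ b ∈ fn.toADF.aDiscarded X ∧ b ∉ X := by
  constructor
  · intro hb
    have hbX : b ∉ X := by
      intro hbX
      obtain ⟨c, hc, e, he, hR⟩ := hb X hsc.2 hbX
      exact hsc.1 ⟨e, he, c, hc, hR⟩
    refine ⟨?_, hbX⟩
    intro G B hev
    by_contra h0
    rw [Set.not_nonempty_iff_eq_empty] at h0
    obtain ⟨pd, hms, hpa⟩ := hev
    obtain ⟨-, hnd, -, -, -, -, hpdG, hGnil, hGlast, hpdTc, -, -, hB⟩ := hpa
    simp only [List.get_eq_getElem] at hpdTc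
    have hpdv : ∀ c ∈ G, ∃ v, pd c = some v ∧ fn.toADF.MinDecIn v c := by
      intro c hc
      cases hpc : pd c with
      | none => exact absurd hpc (hpdG c hc)
      | some v => exact ⟨v, rfl, ((hms.1 c trivial).1 v hpc).1⟩
    have hGval : Valid fn G := by
      intro i hi Z hZ
      obtain ⟨v, hpc, hmdi⟩ := hpdv (G[i]'hi) (List.getElem_mem hi)
      obtain ⟨z, hzZ, hzv⟩ := ((decisivelyIn_iff fn v _).mp hmdi.1).2 Z hZ
      have hzT : z ∈ pdT pd (G[i]'hi) := by rw [pdT_eq hpc]; exact hzv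
      rcases hpdTc i hi hzT with h' | h'
      · exact absurd h' (Set.notMem_empty z)
      · obtain ⟨j, hj, hji, hjz⟩ := h'
        exact ⟨j, hj, hji, by rw [hjz]; exact hzZ⟩
    have hGne : G ≠ [] := by
      intro hG
      exact absurd (hGnil hG) (Set.notMem_empty b)
    have hcoh : fn.Coherent {c | c ∈ G} := by
      intro c hc
      obtain ⟨i, hi, hic⟩ := List.mem_iff_getElem.mp hc
      refine ⟨hc, G.take i ++ [c], ?_⟩
      rw [powerfulSeq_iff]
      refine ⟨by simp, ?_, List.getLast?_concat, ?_⟩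
      · intro y hy
        rcases List.mem_append.mp hy with h' | h'
        · exact List.mem_of_mem_take h'
        · simp only [List.mem_singleton] at h'
          subst h'
          exact hc
      · refine valid_concat fn (valid_take fn hGval i) ?_
        intro Z hZ
        obtain ⟨v, hpc, hmdi⟩ := hpdv c hc
        obtain ⟨z, hzZ, hzv⟩ := ((decisivelyIn_iff fn v _).mp hmdi.1).2 Z hZ
        have hzT : z ∈ pdT pd (G[i]'hi) := by rw [hic, pdT_eq hpc]; exact hzv
        rcases hpdTc i hi hzT with h' | h'
        · exact absurd h' (Set.notMem_empty z)
        · obtain ⟨j, hj, hji, hjz⟩ := h'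
          refine ⟨z, hzZ, ?_⟩
          refine List.mem_iff_getElem.mpr ⟨j, by rw [List.length_take]; omega, ?_⟩
          rw [List.getElem_take]
          exact hjz
    have hbC : b ∈ {c | c ∈ G} := mem_of_getLast? (hGlast hGne)
    obtain ⟨c, hcC, e, heX, hRec⟩ := hb _ hcoh hbC
    obtain ⟨v, hpc, hmdi⟩ := hpdv c hcC
    have hef : v e = some false := ((decisivelyIn_iff fn v c).mp hmdi.1).1 e hRec
    have heB : e ∈ B := by
      rw [hB]
      refine Set.mem_union_right _ ?_
      exact Set.mem_biUnion hcC (by rw [pdF_eq hpc]; exact hef)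
    rw [Set.eq_empty_iff_forall_notMem] at h0
    exact h0 e ⟨heB, heX⟩
  · rintro ⟨hbd, hbX⟩ Cset hcoh hbC
    by_contra hno
    push_neg at hno
    obtain ⟨-, H, hps⟩ := hcoh b hbC
    rw [powerfulSeq_iff] at hps
    obtain ⟨hHne, hHC, hHlast, hHval⟩ := hps
    have hbH : b ∈ H := mem_of_getLast? hHlast
    have hPex : ∃ i, ∃ hh : i < H.length, H[i]'hh = b := List.mem_iff_getElem.mp hbH
    obtain ⟨hi₀, hi₀b⟩ := Nat.find_spec hPex
    have hH'val : Valid fn (H.take (Nat.find hPex) ++ [b]) := by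
      refine valid_concat fn (valid_take fn hHval _) ?_
      intro Z hZ
      obtain ⟨j, hj, hji, hmem⟩ := hHval (Nat.find hPex) hi₀ Z (by rw [hi₀b]; exact hZ)
      refine ⟨H[j]'hj, hmem, ?_⟩
      refine List.mem_iff_getElem.mpr ⟨j, by rw [List.length_take]; omega, ?_⟩
      rw [List.getElem_take]
    have hbnotin : b ∉ H.take (Nat.find hPex) := by
      intro hmem
      obtain ⟨j, hj, hjb⟩ := List.mem_iff_getElem.mp hmem
      have hjlen : j < H.length :=
        lt_of_lt_of_le hj (by rw [List.length_take]; exact min_le_right _ _)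
      have hji : j < Nat.find hPex :=
        lt_of_lt_of_le hj (by rw [List.length_take]; exact min_le_left _ _)
      refine Nat.find_min hPex hji ⟨hjlen, ?_⟩
      rw [← List.getElem_take (h := hj)]
      exact hjb
    obtain ⟨G, hGnd, hGval, hGmem, hGlastF⟩ := exists_nodup_valid fn _ hH'val
    have hGlast : G.getLast? = some b := hGlastF (H.take (Nat.find hPex)) b rfl hbnotin
    have hGC : ∀ x ∈ G, x ∈ Cset := by
      intro x hx
      rcases List.mem_append.mp ((hGmem x).mp hx) with h' | h'
      · exact hHC x (List.mem_of_mem_take h')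
      · simp only [List.mem_singleton] at h'
        subst h'
        exact hbC
    have hexv : ∀ x : α, ∃ v : Interp α, fn.toADF.MinDecIn v x ∧
        (x ∈ G → tset v ⊆ {y | ∃ (i j : ℕ) (hi : i < G.length) (hj : j < G.length),
          j < i ∧ G[i]'hi = x ∧ G[j]'hj = y}) ∧
        fset v = {e | fn.R e x} := by
      intro x
      by_cases hx : x ∈ G
      · have hhit : ∀ Z, fn.N Z x →
            (Z ∩ {y | ∃ (i j : ℕ) (hi : i < G.length) (hj : j < G.length),
              j < i ∧ G[i]'hi = x ∧ G[j]'hj = y}).Nonempty := by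
          intro Z hZ
          obtain ⟨i, hi, hix⟩ := List.mem_iff_getElem.mp hx
          obtain ⟨j, hj, hji, hmem⟩ := hGval i hi Z (by rw [hix]; exact hZ)
          exact ⟨G[j]'hj, hmem, ⟨i, j, hi, hj, hji, hix, rfl⟩⟩
        obtain ⟨v, h1, h2, h3⟩ := exists_minDecIn fn h x _ hhit
        exact ⟨v, h1, fun _ => h2, h3⟩
      · obtain ⟨v, h1, h2, h3⟩ := exists_minDecIn fn h x Set.univ
          (fun Z hZ => by
            obtain ⟨z, hz⟩ := fn.nonempty_of_N Z x hZ
            exact ⟨z, hz, trivial⟩)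
        exact ⟨v, h1, fun hc => absurd hc hx, h3⟩
    choose vfun hmdi hsub hfs using hexv
    have hms : fn.toADF.MaxSound Set.univ (fun x => some (vfun x)) := by
      constructor
      · intro c _
        constructor
        · intro v hv
          simp only [Option.some.injEq] at hv
          subst hv
          exact ⟨hmdi c, Set.subset_univ _⟩
        · intro h0
          simp at h0
      · intro hex
        obtain ⟨X'', pd', -, -, hss, -, -⟩ := hex
        have hsd : soundDom Set.univ (fun x : α => some (vfun x)) = Set.univ := by
          ext c
          simp [soundDom]
        rw [hsd] at hss
        exact hss.2 (Set.subset_univ _)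
    have hbG : b ∈ G := (hGmem b).mpr (List.mem_append.mpr (Or.inr (by simp)))
    have hGne : G ≠ [] := List.ne_nil_of_mem hbG
    have heval : IsPAEvalWith (fun x : α => some (vfun x)) Set.univ b ∅ G
        ((⋃ c ∈ (∅ : Set α), pdF (fun x : α => some (vfun x)) c) ∪
          ⋃ c ∈ {c | c ∈ G}, pdF (fun x : α => some (vfun x)) c) := by
      refine ⟨fun c _ => Set.notMem_empty c, hGnd, trivial, Set.empty_subset _,
        fun c _ => trivial, fun c hc => absurd hc (Set.notMem_empty c),
        fun c _ => by simp, fun hG => absurd hG hGne, fun _ => hGlast, ?_,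
        fun c hc => absurd hc (Set.notMem_empty c),
        fun c hc => absurd hc (Set.notMem_empty c), rfl⟩
      intro i hi
      simp only [List.get_eq_getElem]
      intro y hy
      rw [pdT_eq (rfl : (fun x : α => some (vfun x)) (G[i]'hi) = some (vfun (G[i]'hi)))] at hy
      obtain ⟨i', j, hi', hj, hji, hieq, hjeq⟩ := hsub (G[i]'hi) (List.getElem_mem hi) hy
      have hii : i' = i := hGnd.getElem_inj_iff.mp hieq
      subst hii
      exact Set.mem_union_right _ ⟨j, hj, hji, hjeq⟩
    obtain ⟨e, heB, heX⟩ := hbd G _ ⟨fun x : α => some (vfun x), hms, heval⟩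
    rcases heB with h' | h'
    · simp at h'
    · simp only [Set.mem_iUnion, Set.mem_setOf_eq] at h'
      obtain ⟨c, hcG, hepdF⟩ := h'
      rw [pdF_eq (rfl : (fun x : α => some (vfun x)) c = some (vfun c)), hfs c] at hepdF
      exact hno c (hGC c hcG) e heX hepdF

lemma aRange_eq_true_iff (X : Set α) (c : α) :
    fn.toADF.aRange X c = some true ↔ c ∈ X := by
  simp only [ADF.aRange, mkInterp]
  split_ifs with h1 h2 <;> simp_all

lemma aRange_eq_false_iff (X : Set α) (c : α) :
    fn.toADF.aRange X c = some false ↔ c ∈ fn.toADF.aDiscarded X \ X := by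
  simp only [ADF.aRange, mkInterp]
  split_ifs with h1 h2 <;> simp_all [Set.mem_diff]

end AFNADF

open Dialectical in
/-- a strongly coherent set defends `a` in a strongly consistent AFN iff
`a` is decisively in w.r.t. the acyclic range of `X` in the corresponding ADF. -/
theorem afn_toADF_defends_iff_decisivelyIn
    {α : Type} [Fintype α] (fn : AFN α) (h : fn.StronglyConsistent)
    (X : Set α) (hsc : fn.StronglyCoherent X) (a : α) :
    fn.Defends X a ↔ fn.toADF.DecisivelyIn (fn.toADF.aRange X) a := by
  constructor
  · rintro ⟨hcoh, hatt⟩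
    rw [AFNADF.decisivelyIn_iff]
    constructor
    · intro b hb
      rw [AFNADF.aRange_eq_false_iff]
      obtain ⟨h1, h2⟩ := (AFNADF.mem_discardedAtt_iff fn h hsc b).mp (hatt b hb)
      exact ⟨h1, h2⟩
    · intro Z hZ
      obtain ⟨z, hz1, hz2⟩ := (AFNADF.coherent_union_iff fn hsc a).mp hcoh Z hZ
      exact ⟨z, hz1, (AFNADF.aRange_eq_true_iff fn X z).mpr hz2⟩
  · intro hd
    rw [AFNADF.decisivelyIn_iff] at hd
    obtain ⟨h1, h2⟩ := hd
    constructor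
    · rw [AFNADF.coherent_union_iff fn hsc a]
      intro Z hZ
      obtain ⟨z, hz1, hz2⟩ := h2 Z hZ
      exact ⟨z, hz1, (AFNADF.aRange_eq_true_iff fn X z).mp hz2⟩
    · intro bb hbb
      rw [AFNADF.mem_discardedAtt_iff fn h hsc bb]
      have hm := (AFNADF.aRange_eq_false_iff fn X bb).mp (h1 bb hbb)
      exact ⟨hm.1, hm.2⟩
end

section
/- Let (A, R, N) be a strongly consistent AFN and ADF^FN its corresponding ADF. Then: X ⊆ A is strongly coherent in (A, R, N) iff it is pd-acyclic conflict-free in ADF^FN; for σ ∈ {admissible, complete, preferred}, X is a σ-extension of (A, R, N) iff it is an aa-σ-extension of ADF^FN; X is stable in (A, R, N) iff it is stable in ADF^FN; and X is the grounded extension of (A, R, N) iff it is the acyclic grounded extension of ADF^FN. -/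
open Classical

universe u

/-! ### Auxiliary material for the AFN correspondence -/

namespace AFNAux

open Dialectical

variable {α : Type} [Fintype α] (fn : AFN α)

/-- attackers of `s` -/
def att (s : α) : Set α := {b | fn.R b s}

/-- `T` hits every necessity set of `s`. -/
def Hits (s : α) (T : Set α) : Prop := ∀ Z, fn.N Z s → (Z ∩ T).Nonempty

/-- grounded list on `X` -/
def Gr (X : Set α) (G : List α) : Prop :=
  (∀ b ∈ G, b ∈ X) ∧
  ∀ i : ℕ, ∀ h : i < G.length, ∀ B : Set α, fn.N B (G.get ⟨i, h⟩) →
    ∃ j : ℕ, ∃ hj : j < G.length, j < i ∧ G.get ⟨j, hj⟩ ∈ B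

lemma powerfulSeq_iff (X : Set α) (G : List α) (a : α) :
    fn.PowerfulSeq X G a ↔ G ≠ [] ∧ G.getLast? = some a ∧ Gr fn X G := by
  constructor
  · rintro ⟨h1, h2, h3, h4⟩
    refine ⟨h1, h3, h2, ?_⟩
    intro i hi B hB
    obtain ⟨j, hj, hji, hmem⟩ := h4 i hi B hB
    exact ⟨j, hj, hji, hmem⟩
  · rintro ⟨h1, h3, h2, h4⟩
    refine ⟨h1, h2, h3, ?_⟩
    intro i hi B hB
    obtain ⟨j, hj, hji, hmem⟩ := h4 i hi B hB
    exact ⟨j, hj, hji, hmem⟩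

/-- iterated derivability -/
def derN (X : Set α) : ℕ → Set α
  | 0 => ∅
  | n + 1 => {a | a ∈ X ∧ ∀ Z, fn.N Z a → (Z ∩ derN X n).Nonempty}

def derSet (X : Set α) : Set α := ⋃ n, derN fn X n

lemma derN_mono (X : Set α) : ∀ n, derN fn X n ⊆ derN fn X (n + 1) := by
  intro n
  induction n with
  | zero => simp [derN]
  | succ n ih =>
    rintro a ⟨ha, hz⟩
    exact ⟨ha, fun Z hZ => ((hz Z hZ).mono (Set.inter_subset_inter_right _ ih))⟩

lemma derN_subset (X : Set α) (n : ℕ) : derN fn X n ⊆ X := by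
  cases n with
  | zero => simp [derN]
  | succ n => rintro a ⟨ha, _⟩; exact ha

lemma derSet_subset (X : Set α) : derSet fn X ⊆ X := by
  rintro a ha
  obtain ⟨_, ⟨n, rfl⟩, ha⟩ := ha
  exact derN_subset fn X n ha

lemma mem_derSet {X : Set α} {a : α} : a ∈ derSet fn X ↔ ∃ n, a ∈ derN fn X n := by
  simp [derSet]

lemma derN_mono_le (X : Set α) {m n : ℕ} (h : m ≤ n) : derN fn X m ⊆ derN fn X n := by
  induction h with
  | refl => exact subset_rfl
  | step h ih => exact ih.trans (derN_mono fn X _)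

/-- closure of derSet -/
lemma mem_derSet_of_closed {X : Set α} {a : α} (ha : a ∈ X)
    (h : ∀ Z, fn.N Z a → (Z ∩ derSet fn X).Nonempty) : a ∈ derSet fn X := by
  classical
  -- choose a uniform level
  have key : ∃ n, ∀ z ∈ derSet fn X, z ∈ derN fn X n := by
    choose f hf using fun (z : α) (hz : z ∈ derSet fn X) => (mem_derSet fn).1 hz
    refine ⟨Finset.univ.sup (fun z : α => if hz : z ∈ derSet fn X then f z hz else 0), ?_⟩
    intro z hz
    exact derN_mono_le fn X (by
      have := Finset.le_sup (f := fun z : α => if hz : z ∈ derSet fn X then f z hz else 0)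
        (Finset.mem_univ z)
      simpa [hz] using this) (hf z hz)
  obtain ⟨n, hn⟩ := key
  refine (mem_derSet fn).2 ⟨n + 1, ha, fun Z hZ => ?_⟩
  obtain ⟨z, hz1, hz2⟩ := h Z hZ
  exact ⟨z, hz1, hn z hz2⟩

/-- elements of grounded lists are derivable -/
lemma Gr.get_mem_derSet {X : Set α} {G : List α} (hG : Gr fn X G) :
    ∀ i (h : i < G.length), G.get ⟨i, h⟩ ∈ derSet fn X := by
  intro i
  induction i using Nat.strong_induction_on with
  | _ i ih =>
    intro h
    refine (mem_derSet fn).2 ?_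
    have key : ∀ Z, fn.N Z (G.get ⟨i, h⟩) → (Z ∩ derSet fn X).Nonempty := by
      intro Z hZ
      obtain ⟨j, hj, hji, hmem⟩ := hG.2 i h Z hZ
      exact ⟨G.get ⟨j, hj⟩, hmem, ih j hji hj⟩
    have := mem_derSet_of_closed fn (hG.1 _ (G.get_mem ⟨i, h⟩)) key
    exact (mem_derSet fn).1 this

end AFNAux

namespace AFNAux

open Dialectical

set_option linter.unusedSectionVars false

variable {α : Type} [Fintype α] (fn : AFN α)

lemma grow {X E : Set α} : ∀ n, ∀ s ∈ derN fn X n, s ∉ E →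
    ∃ b ∈ derSet fn X, b ∉ E ∧ ∀ Z, fn.N Z b → (Z ∩ E).Nonempty := by
  intro n
  induction n with
  | zero => intro s hs; exact absurd hs (by simp [derN])
  | succ n ih =>
    rintro s ⟨hsX, hsZ⟩ hsE
    by_cases hc : ∀ Z, fn.N Z s → (Z ∩ E).Nonempty
    · exact ⟨s, (mem_derSet fn).2 ⟨n + 1, hsX, hsZ⟩, hsE, hc⟩
    · push_neg at hc
      obtain ⟨Z, hZ, hZE⟩ := hc
      obtain ⟨z, hz1, hz2⟩ := hsZ Z hZ
      have hzE : z ∉ E := fun hzE => (Set.eq_empty_iff_forall_notMem.1 hZE z ⟨hz1, hzE⟩)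
      exact ih z hz2 hzE

lemma Gr.append {X : Set α} {G : List α} {b : α} (hG : Gr fn X G) (hb : b ∈ X)
    (hw : ∀ Z, fn.N Z b → ∃ z ∈ Z, z ∈ G) : Gr fn X (G ++ [b]) := by
  constructor
  · intro c hc
    rcases List.mem_append.1 hc with hc | hc
    · exact hG.1 c hc
    · simp at hc; subst hc; exact hb
  · intro i hi B hB
    have hlen : (G ++ [b]).length = G.length + 1 := by simp
    by_cases hiG : i < G.length
    · have hget : (G ++ [b]).get ⟨i, hi⟩ = G.get ⟨i, hiG⟩ :=
        List.getElem_append_left hiG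
      rw [hget] at hB
      obtain ⟨j, hj, hji, hmem⟩ := hG.2 i hiG B hB
      refine ⟨j, by omega, hji, ?_⟩
      have : (G ++ [b]).get ⟨j, by omega⟩ = G.get ⟨j, hj⟩ :=
        List.getElem_append_left hj
      rw [this]; exact hmem
    · have hib : i = G.length := by omega
      have hget : (G ++ [b]).get ⟨i, hi⟩ = b := by
        subst hib
        simp [List.get_eq_getElem]
      rw [hget] at hB
      obtain ⟨z, hz1, hz2⟩ := hw B hB
      obtain ⟨⟨j, hj⟩, hjz⟩ := List.mem_iff_get.1 hz2
      refine ⟨j, by omega, by omega, ?_⟩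
      have : (G ++ [b]).get ⟨j, by omega⟩ = G.get ⟨j, hj⟩ :=
        List.getElem_append_left hj
      rw [this, hjz]; exact hz1

/-- enumeration of the derivable set by a nodup grounded list -/
lemma exists_enum (X : Set α) :
    ∃ G : List α, G.Nodup ∧ Gr fn X G ∧ ∀ b ∈ derSet fn X, b ∈ G := by
  classical
  have key : ∀ k : ℕ, ∃ G : List α, G.Nodup ∧ Gr fn X G ∧ (∀ b ∈ G, b ∈ derSet fn X) ∧
      ((∀ b ∈ derSet fn X, b ∈ G) ∨ k ≤ G.length) := by
    intro k
    induction k with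
    | zero => exact ⟨[], by simp, ⟨by simp, by simp⟩, by simp, Or.inr (by simp)⟩
    | succ k ih =>
      obtain ⟨G, hnd, hGr, hsub, hor⟩ := ih
      rcases hor with hall | hlen
      · exact ⟨G, hnd, hGr, hsub, Or.inl hall⟩
      · by_cases hall : ∀ b ∈ derSet fn X, b ∈ G
        · exact ⟨G, hnd, hGr, hsub, Or.inl hall⟩
        · push_neg at hall
          obtain ⟨s, hs, hsG⟩ := hall
          obtain ⟨n, hsn⟩ := (mem_derSet fn).1 hs
          obtain ⟨b, hbD, hbG, hbw⟩ := grow fn n s hsn (E := {c | c ∈ G}) hsG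
          refine ⟨G ++ [b], ?_, ?_, ?_, Or.inr (by simp; omega)⟩
          · simp [List.nodup_append, hnd]; exact fun c hc hcb => hbG (hcb ▸ hc)
          · exact Gr.append fn hGr (derSet_subset fn X hbD)
              (fun Z hZ => by obtain ⟨z, h1, h2⟩ := hbw Z hZ; exact ⟨z, h1, h2⟩)
          · intro c hc
            rcases List.mem_append.1 hc with hc | hc
            · exact hsub c hc
            · simp at hc; subst hc; exact hbD
  obtain ⟨G, hnd, hGr, _, hor⟩ := key (Fintype.card α + 1)
  rcases hor with hall | hlen
  · exact ⟨G, hnd, hGr, hall⟩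
  · exact absurd (List.Nodup.length_le_card hnd) (by omega)

lemma length_take_le' (G : List α) (n : ℕ) : (G.take n).length ≤ G.length := by
  rw [List.length_take]; exact min_le_right _ _

lemma Gr.take {X : Set α} {G : List α} (hG : Gr fn X G) (n : ℕ) : Gr fn X (G.take n) := by
  constructor
  · intro b hb; exact hG.1 b (List.mem_of_mem_take hb)
  · intro i hi B hB
    have hilen : i < G.length := lt_of_lt_of_le hi (length_take_le' G n)
    have hget : ∀ j (hj : j < (G.take n).length), (G.take n).get ⟨j, hj⟩ =
        G.get ⟨j, lt_of_lt_of_le hj (length_take_le' G n)⟩ := by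
      intro j hj
      simp [List.get_eq_getElem, List.getElem_take]
    rw [hget i hi] at hB
    obtain ⟨j, hj, hji, hmem⟩ := hG.2 i hilen B hB
    refine ⟨j, lt_of_lt_of_le (lt_of_lt_of_le hji (le_of_lt hi)) (le_refl _), hji, ?_⟩
    rw [hget j _]
    exact hmem

/-- a nodup grounded list ending at `a`, for derivable `a` -/
lemma exists_grounded_list {X : Set α} {a : α} (ha : a ∈ derSet fn X) :
    ∃ G : List α, G.Nodup ∧ Gr fn X G ∧ G ≠ [] ∧ G.getLast? = some a := by
  obtain ⟨G, hnd, hGr, hall⟩ := exists_enum fn X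
  have haG : a ∈ G := hall a ha
  obtain ⟨⟨i, hi⟩, hget⟩ := List.mem_iff_get.1 haG
  refine ⟨G.take (i + 1), (List.take_sublist _ _).nodup hnd, Gr.take fn hGr (i + 1), ?_, ?_⟩
  · have : (G.take (i + 1)).length = i + 1 := by simp [List.length_take]; omega
    intro hnil; rw [hnil] at this; simp at this
  · have hlen : (G.take (i + 1)).length = i + 1 := by simp [List.length_take]; omega
    rw [List.getLast?_eq_getElem?]
    rw [hlen]
    simp only [Nat.add_sub_cancel]
    rw [List.getElem?_take, if_pos (by omega)]
    rw [List.getElem?_eq_getElem hi]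
    simp [List.get_eq_getElem] at hget
    rw [hget]

lemma getLast?_eq_get {G : List α} {a : α} (h : G.getLast? = some a) :
    ∃ i, ∃ hi : i < G.length, G.get ⟨i, hi⟩ = a := by
  have hne : G ≠ [] := by rintro rfl; simp at h
  have hlen : 0 < G.length := List.length_pos_iff.2 hne
  refine ⟨G.length - 1, by omega, ?_⟩
  rw [List.getLast?_eq_getElem?, List.getElem?_eq_getElem (by omega)] at h
  simpa using Option.some.inj h

lemma coherent_iff_subset_derSet (X : Set α) : fn.Coherent X ↔ X ⊆ derSet fn X := by
  constructor
  · intro hcoh a haX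
    obtain ⟨_, G, hG⟩ := hcoh a haX
    rw [powerfulSeq_iff] at hG
    obtain ⟨hne, hlast, hGr⟩ := hG
    obtain ⟨i, hi, hget⟩ := getLast?_eq_get hlast
    rw [← hget]
    exact Gr.get_mem_derSet fn hGr i hi
  · intro hsub a haX
    obtain ⟨G, _, hGr, hne, hlast⟩ := exists_grounded_list fn (hsub haX)
    exact ⟨haX, G, (powerfulSeq_iff fn X G a).2 ⟨hne, hlast, hGr⟩⟩

end AFNAux

namespace AFNAux

open Dialectical

set_option linter.unusedSectionVars false

variable {α : Type} [Fintype α] (fn : AFN α)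

lemma mem_par {s b : α} : b ∈ (fn.toADF).par s ↔ (fn.R b s ∨ ∃ B, b ∈ B ∧ fn.N B s) :=
  Iff.rfl

lemma evalCond_true_iff (s : α) (w : Interp α) :
    fn.toADF.evalCond s w = true ↔
      ¬ ((∃ p ∈ tset w ∩ fn.toADF.par s, fn.R p s) ∨
        ∃ Z, fn.N Z s ∧ Z ∩ (tset w ∩ fn.toADF.par s) = ∅) := by
  simp only [ADF.evalCond, AFN.toADF, decide_eq_true_eq]

/-- extend an interpretation by constant `c` on `P` -/
noncomputable def ext0 (v : Interp α) (P : Set α) (c : Bool) : Interp α :=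
  fun x => if x ∈ idom v then v x else if x ∈ P then some c else none

lemma ext0_of_mem {v : Interp α} {P : Set α} {c : Bool} {x : α} (h : x ∈ idom v) :
    ext0 v P c x = v x := by simp only [ext0, if_pos h]

lemma ext0_of_not_mem {v : Interp α} {P : Set α} {c : Bool} {x : α} (h1 : x ∉ idom v)
    (h2 : x ∈ P) : ext0 v P c x = some c := by simp only [ext0, if_neg h1, if_pos h2]

lemma ext0_completion (v : Interp α) (P : Set α) (c : Bool) :
    Completion v (ext0 v P c) (idom v ∪ P) := by
  constructor
  · ext x
    constructor
    · intro hx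
      by_cases h1 : x ∈ idom v
      · exact Or.inl h1
      · by_cases h2 : x ∈ P
        · exact Or.inr h2
        · exact absurd (by simp only [ext0, if_neg h1, if_neg h2] : ext0 v P c x = none) hx
    · rintro (h1 | h2)
      · show ext0 v P c x ≠ none
        rw [ext0_of_mem h1]; exact h1
      · show ext0 v P c x ≠ none
        by_cases h1 : x ∈ idom v
        · rw [ext0_of_mem h1]; exact h1
        · rw [ext0_of_not_mem h1 h2]; simp
  · intro a ha; exact ext0_of_mem ha

lemma decIn_iff (v : Interp α) (s : α) :
    fn.toADF.DecisivelyIn v s ↔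
      (∀ b, fn.R b s → v b = some false) ∧ (∀ Z, fn.N Z s → ∃ z ∈ Z, v z = some true) := by
  constructor
  · intro hd
    constructor
    · intro b hb
      by_contra hvb
      set w : Interp α := ext0 v (fn.toADF.par s) true with hw
      have := (evalCond_true_iff fn s w).1 (hd w (ext0_completion v _ true))
      apply this
      have hbpar : b ∈ fn.toADF.par s := Or.inl hb
      refine Or.inl ⟨b, ⟨?_, hbpar⟩, hb⟩
      show w b = some true
      by_cases h1 : b ∈ idom v
      · rw [hw, ext0_of_mem h1]
        have hne : v b ≠ none := h1
        rcases hvb' : v b with _ | c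
        · exact absurd hvb' hne
        · rcases c with _ | _
          · exact absurd hvb' hvb
          · rfl
      · rw [hw, ext0_of_not_mem h1 hbpar]
    · intro Z hZ
      by_contra hc
      push_neg at hc
      set w : Interp α := ext0 v (fn.toADF.par s) false with hw
      have := (evalCond_true_iff fn s w).1 (hd w (ext0_completion v _ false))
      apply this
      refine Or.inr ⟨Z, hZ, ?_⟩
      ext z
      simp only [Set.mem_inter_iff, Set.mem_empty_iff_false, iff_false, not_and]
      intro hzZ hmem hpar
      have hwz : w z = some true := hmem
      by_cases h1 : z ∈ idom v
      · rw [hw, ext0_of_mem h1] at hwz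
        exact hc z hzZ hwz
      · rw [hw, ext0_of_not_mem h1 hpar] at hwz
        simp at hwz
  · rintro ⟨h1, h2⟩ w ⟨hdom, hagree⟩
    rw [evalCond_true_iff]
    rintro (⟨p, ⟨hpt, _⟩, hpR⟩ | ⟨Z, hZ, hZP⟩)
    · have hvp := h1 p hpR
      have hpi : p ∈ idom v := by simp [idom, hvp]
      have hwp : w p = some false := by rw [hagree p hpi, hvp]
      have hwt : w p = some true := hpt
      rw [hwp] at hwt
      simp at hwt
    · obtain ⟨z, hzZ, hzv⟩ := h2 Z hZ
      have hzi : z ∈ idom v := by simp [idom, hzv]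
      have hzt : z ∈ tset w := by show w z = some true; rw [hagree z hzi, hzv]
      have hzp : z ∈ fn.toADF.par s := Or.inr ⟨Z, hzZ, hZ⟩
      exact absurd (Set.eq_empty_iff_forall_notMem.1 hZP z ⟨hzZ, hzt, hzp⟩) (fun h => h)

lemma tset_mkInterp (T F : Set α) : tset (mkInterp T F) = T := by
  ext a; simp only [tset, mkInterp, Set.mem_setOf_eq]
  by_cases h1 : a ∈ T
  · simp [h1]
  · by_cases h2 : a ∈ F <;> simp [h1, h2]

lemma fset_mkInterp (T F : Set α) : fset (mkInterp T F) = F \ T := by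
  ext a; simp only [fset, mkInterp, Set.mem_setOf_eq, Set.mem_diff]
  by_cases h1 : a ∈ T
  · simp [h1]
  · by_cases h2 : a ∈ F <;> simp [h1, h2]

lemma tset_fset_disjoint (v : Interp α) : tset v ∩ fset v = ∅ := by
  ext a
  simp only [Set.mem_inter_iff, tset, fset, Set.mem_setOf_eq, Set.mem_empty_iff_false, iff_false,
    not_and]
  intro h1 h2; rw [h1] at h2; simp at h2

/-- minimal hitting sets -/
def MinHits (s : α) (T : Set α) : Prop :=
  Hits fn s T ∧ ∀ T' ⊆ T, Hits fn s T' → T' = T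

lemma minDec_iff {v : Interp α} {s : α} :
    fn.toADF.MinDecIn v s ↔ fset v = att fn s ∧ MinHits fn s (tset v) := by
  constructor
  · rintro ⟨hd, hmin⟩
    rw [decIn_iff] at hd
    have hattf : att fn s ⊆ fset v := fun b hb => hd.1 b hb
    have hhits : Hits fn s (tset v) := by
      intro Z hZ
      obtain ⟨z, hz1, hz2⟩ := hd.2 Z hZ
      exact ⟨z, hz1, hz2⟩
    have hdisj : att fn s ∩ tset v = ∅ := by
      rw [← Set.subset_empty_iff, ← tset_fset_disjoint v]
      rintro x ⟨hx1, hx2⟩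
      exact ⟨hx2, hattf hx1⟩
    have hwdec : ∀ T : Set α, T ⊆ tset v → Hits fn s T →
        fn.toADF.DecisivelyIn (mkInterp T (att fn s)) s := by
      intro T hTsub hThits
      rw [decIn_iff]
      constructor
      · intro b hb
        have hbT : b ∉ T := by
          intro hbT
          exact absurd (Set.eq_empty_iff_forall_notMem.1 hdisj b ⟨hb, hTsub hbT⟩) (fun h => h)
        simp [mkInterp, hbT, hb, att, Set.mem_setOf_eq]
      · intro Z hZ
        obtain ⟨z, hz1, hz2⟩ := hThits Z hZ
        exact ⟨z, hz1, by simp [mkInterp, hz2]⟩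
    have hfv : fset v = att fn s := by
      have := hmin (mkInterp (tset v) (att fn s)) (hwdec _ subset_rfl hhits)
        (by rw [tset_mkInterp]) (by
          rw [fset_mkInterp]
          exact fun b hb => hattf hb.1)
      rw [fset_mkInterp] at this
      rw [← this.2]
      ext b
      simp only [Set.mem_diff]
      constructor
      · intro hb; exact hb.1
      · intro hb
        refine ⟨hb, ?_⟩
        intro hbt
        exact absurd (Set.eq_empty_iff_forall_notMem.1 hdisj b ⟨hb, hbt⟩) (fun h => h)
    refine ⟨hfv, hhits, ?_⟩
    intro T hTsub hThits
    have := hmin (mkInterp T (att fn s)) (hwdec T hTsub hThits)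
      (by rw [tset_mkInterp]; exact hTsub) (by
        rw [fset_mkInterp, hfv]
        exact fun b hb => hb.1)
    rw [tset_mkInterp] at this
    exact this.1
  · rintro ⟨hfv, hhits, hminT⟩
    constructor
    · rw [decIn_iff]
      constructor
      · intro b hb
        have : b ∈ fset v := by rw [hfv]; exact hb
        exact this
      · intro Z hZ
        obtain ⟨z, hz1, hz2⟩ := hhits Z hZ
        exact ⟨z, hz1, hz2⟩
    · intro w hw htsub hfsub
      rw [decIn_iff] at hw
      have hfw : fset w = fset v := by
        apply Set.Subset.antisymm hfsub
        rw [hfv]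
        exact fun b hb => hw.1 b hb
      have htw : Hits fn s (tset w) := by
        intro Z hZ
        obtain ⟨z, hz1, hz2⟩ := hw.2 Z hZ
        exact ⟨z, hz1, hz2⟩
      exact ⟨hminT (tset w) htsub htw, hfw⟩

lemma exists_minHits_subset' {s : α} : ∀ n : ℕ, ∀ {W : Set α}, W.ncard ≤ n → Hits fn s W →
    ∃ T ⊆ W, MinHits fn s T := by
  intro n
  induction n with
  | zero =>
    intro W hcard hW
    have : W = ∅ := by
      rw [← Set.ncard_eq_zero (Set.toFinite W)]; omega
    refine ⟨W, subset_rfl, hW, ?_⟩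
    intro T' hT' _
    rw [this] at hT' ⊢
    exact Set.subset_empty_iff.1 hT'
  | succ n ih =>
    intro W hcard hW
    by_cases hmin : ∀ T' ⊆ W, Hits fn s T' → T' = W
    · exact ⟨W, subset_rfl, hW, hmin⟩
    · push_neg at hmin
      obtain ⟨T', hT'W, hT'h, hne⟩ := hmin
      have hlt : T'.ncard ≤ n := by
        have := Set.ncard_lt_ncard (HasSubset.Subset.ssubset_of_ne hT'W hne) (Set.toFinite W)
        omega
      obtain ⟨T, hTW, hm⟩ := ih hlt hT'h
      exact ⟨T, hTW.trans hT'W, hm⟩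

lemma exists_minHits_subset {s : α} {W : Set α} (hW : Hits fn s W) :
    ∃ T ⊆ W, MinHits fn s T :=
  exists_minHits_subset' fn W.ncard le_rfl hW

lemma minHits_mem_nec {s : α} {T : Set α} (h : MinHits fn s T) :
    ∀ t ∈ T, ∃ Z, fn.N Z s ∧ t ∈ Z := by
  intro t ht
  by_contra hc
  push_neg at hc
  have hdiff : Hits fn s (T \ {t}) := by
    intro Z hZ
    obtain ⟨z, hz1, hz2⟩ := h.1 Z hZ
    refine ⟨z, hz1, hz2, ?_⟩
    simp only [Set.mem_singleton_iff]
    rintro rfl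
    exact hc Z hZ hz1
  have := h.2 (T \ {t}) Set.diff_subset hdiff
  have htt : t ∈ T \ {t} := by rw [this]; exact ht
  simp at htt

lemma exists_minDec_subset (hsc : fn.StronglyConsistent) {s : α} {W : Set α}
    (hW : Hits fn s W) :
    ∃ v, fn.toADF.MinDecIn v s ∧ tset v ⊆ W := by
  obtain ⟨T, hTW, hm⟩ := exists_minHits_subset fn hW
  have hdisj : ∀ t ∈ T, t ∉ att fn s := by
    intro t ht hatt
    obtain ⟨Z, hZ, htZ⟩ := minHits_mem_nec fn hm t ht
    exact absurd (Set.eq_empty_iff_forall_notMem.1 (hsc s) t ⟨⟨Z, htZ, hZ⟩, hatt⟩)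
      (fun h => h)
  refine ⟨mkInterp T (att fn s), ?_, ?_⟩
  · rw [minDec_iff, tset_mkInterp, fset_mkInterp]
    refine ⟨?_, hm⟩
    ext b
    simp only [Set.mem_diff]
    exact ⟨fun hb => hb.1, fun hb => ⟨hb, fun hbT => hdisj b hbT hb⟩⟩
  · rw [tset_mkInterp]; exact hTW

lemma hits_union_nec (s : α) : Hits fn s {z | ∃ Z, fn.N Z s ∧ z ∈ Z} := by
  intro Z hZ
  obtain ⟨z, hz⟩ := fn.nonempty_of_N Z s hZ
  exact ⟨z, hz, Z, hZ, hz⟩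

lemma exists_minDec (hsc : fn.StronglyConsistent) (s : α) :
    ∃ v, fn.toADF.MinDecIn v s :=
  let ⟨v, hv, _⟩ := exists_minDec_subset fn hsc (hits_union_nec fn s)
  ⟨v, hv⟩

end AFNAux

namespace AFNAux

open Dialectical

set_option linter.unusedSectionVars false

variable {α : Type} [Fintype α] (fn : AFN α)

lemma pdT_eq {pd : α → Option (Interp α)} {b : α} {v : Interp α} (h : pd b = some v) :
    pdT pd b = tset v := by
  ext c
  simp only [pdT, Set.mem_setOf_eq, h]
  constructor
  · rintro ⟨v', hv', hc⟩
    rw [Option.some.inj hv']; exact hc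
  · intro hc; exact ⟨v, rfl, hc⟩

lemma pdF_eq {pd : α → Option (Interp α)} {b : α} {v : Interp α} (h : pd b = some v) :
    pdF pd b = fset v := by
  ext c
  simp only [pdF, Set.mem_setOf_eq, h]
  constructor
  · rintro ⟨v', hv', hc⟩
    rw [Option.some.inj hv']; exact hc
  · intro hc; exact ⟨v, rfl, hc⟩

/-- construction of an acyclic evaluation from a nodup grounded list -/
lemma build_eval (hsc : fn.StronglyConsistent) {X : Set α} {G : List α} {a : α}
    (hnd : G.Nodup) (hGr : Gr fn X G) (hne : G ≠ []) (hlast : G.getLast? = some a) :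
    ∃ B, fn.toADF.AcyclicEval X a G B ∧ B = ⋃ c ∈ {c | c ∈ G}, att fn c := by
  classical
  have hchoice : ∀ i (hi : i < G.length), ∃ v, fn.toADF.MinDecIn v (G.get ⟨i, hi⟩) ∧
      tset v ⊆ {z | ∃ j, ∃ hj : j < G.length, j < i ∧ G.get ⟨j, hj⟩ = z} := by
    intro i hi
    apply exists_minDec_subset fn hsc
    intro Z hZ
    obtain ⟨j, hj, hji, hmem⟩ := hGr.2 i hi Z hZ
    exact ⟨G.get ⟨j, hj⟩, hmem, j, hj, hji, rfl⟩
  choose vfun hvfun1 hvfun2 using hchoice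
  set vf : ℕ → Interp α := fun i =>
    if hi : i < G.length then vfun i hi else (fun _ => none) with hvf
  have hvf_eq : ∀ i (hi : i < G.length), vf i = vfun i hi := by
    intro i hi; rw [hvf]; simp only [dif_pos hi]
  set pd : α → Option (Interp α) := fun b =>
    if b ∈ G then some (vf (G.idxOf b))
    else if h2 : ∃ v, fn.toADF.MinDecIn v b ∧ tset v ⊆ X then some h2.choose
    else none with hpd
  have hidx : ∀ i (hi : i < G.length), G.idxOf (G.get ⟨i, hi⟩) = i := by
    intro i hi
    have hmem : G.get ⟨i, hi⟩ ∈ G := G.get_mem ⟨i, hi⟩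
    have hlt : G.idxOf (G.get ⟨i, hi⟩) < G.length := List.idxOf_lt_length_iff.2 hmem
    have h1 : G.get ⟨G.idxOf (G.get ⟨i, hi⟩), hlt⟩ = G.get ⟨i, hi⟩ := List.idxOf_get hlt
    have h2 := (hnd.get_inj_iff).1 h1
    exact congrArg Fin.val h2
  have hpdG : ∀ i (hi : i < G.length), pd (G.get ⟨i, hi⟩) = some (vfun i hi) := by
    intro i hi
    have hmem : G.get ⟨i, hi⟩ ∈ G := G.get_mem ⟨i, hi⟩
    rw [hpd]
    simp only [if_pos hmem]
    rw [hidx i hi, hvf_eq i hi]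
  have hGX : ∀ b ∈ G, b ∈ X := hGr.1
  have hpdsome : ∀ b, ∀ v, pd b = some v → fn.toADF.MinDecIn v b ∧ tset v ⊆ X := by
    intro b v hbv
    by_cases hb : b ∈ G
    · obtain ⟨⟨i, hi⟩, rfl⟩ := List.mem_iff_get.1 hb
      rw [hpdG i hi] at hbv
      rw [← Option.some.inj hbv]
      refine ⟨hvfun1 i hi, ?_⟩
      intro z hz
      obtain ⟨j, hj, _, rfl⟩ := hvfun2 i hi hz
      exact hGX _ (G.get_mem ⟨j, hj⟩)
    · rw [hpd] at hbv
      simp only [if_neg hb] at hbv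
      by_cases h2 : ∃ v, fn.toADF.MinDecIn v b ∧ tset v ⊆ X
      · rw [dif_pos h2] at hbv
        rw [← Option.some.inj hbv]
        exact h2.choose_spec
      · rw [dif_neg h2] at hbv
        simp at hbv
  have hpdnone : ∀ b, pd b = none → ¬ ∃ v, fn.toADF.MinDecIn v b ∧ tset v ⊆ X := by
    intro b hbn
    by_cases hb : b ∈ G
    · obtain ⟨⟨i, hi⟩, rfl⟩ := List.mem_iff_get.1 hb
      rw [hpdG i hi] at hbn
      simp at hbn
    · rw [hpd] at hbn
      simp only [if_neg hb] at hbn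
      by_cases h2 : ∃ v, fn.toADF.MinDecIn v b ∧ tset v ⊆ X
      · rw [dif_pos h2] at hbn; simp at hbn
      · exact h2
  have hPDFun : fn.toADF.PDFun X pd :=
    fun b _ => ⟨fun v hv => hpdsome b v hv, fun hn => hpdnone b hn⟩
  have hmax : fn.toADF.MaxSound X pd := by
    refine ⟨hPDFun, ?_⟩
    rintro ⟨X'', pd', hpd'f, hpd's, hss, hsub, _⟩
    obtain ⟨c, hcX, hcns⟩ := Set.exists_of_ssubset hss
    have hcn : pd c = none := by
      by_contra hcn
      exact hcns ⟨hsub hcX, hcn⟩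
    obtain ⟨v, hv⟩ := Option.ne_none_iff_exists'.1 (hpd's c hcX)
    have := (hpd'f c hcX).1 v hv
    exact hpdnone c hcn ⟨v, this.1, this.2.trans hsub⟩
  have hamem : a ∈ G := by
    obtain ⟨i, hi, hget⟩ := getLast?_eq_get hlast
    rw [← hget]; exact G.get_mem ⟨i, hi⟩
  refine ⟨(⋃ c ∈ (∅ : Set α), pdF pd c) ∪ ⋃ c ∈ {c | c ∈ G}, pdF pd c,
    ⟨pd, hmax, ?_⟩, ?_⟩
  · refine ⟨by simp, hnd, hGX a hamem, by simp, hGX, by simp, ?_, fun h => absurd h hne,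
      fun _ => hlast, ?_, by simp, by simp, rfl⟩
    · intro b hb
      obtain ⟨⟨i, hi⟩, rfl⟩ := List.mem_iff_get.1 hb
      rw [hpdG i hi]; simp
    · intro i hi
      rw [pdT_eq (hpdG i hi)]
      intro z hz
      exact Or.inr (hvfun2 i hi hz)
  · have : (⋃ c ∈ (∅ : Set α), pdF pd c) = ∅ := by simp
    rw [this, Set.empty_union]
    apply Set.iUnion₂_congr
    intro c hc
    obtain ⟨⟨i, hi⟩, rfl⟩ := List.mem_iff_get.1 hc
    rw [pdF_eq (hpdG i hi)]
    exact ((minDec_iff fn).1 (hvfun1 i hi)).1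

/-- extraction of a grounded list from an acyclic evaluation -/
lemma eval_extract {X : Set α} {a : α} {G : List α} {B : Set α}
    (h : fn.toADF.AcyclicEval X a G B) :
    G ≠ [] ∧ G.getLast? = some a ∧ Gr fn X G ∧ B = ⋃ c ∈ {c | c ∈ G}, att fn c := by
  obtain ⟨pd, ⟨hPDFun, _⟩, hev⟩ := h
  obtain ⟨_, hnd, haX, _, hGX, _, hGsome, hGnil, hGlast, hT, _, _, hB⟩ := hev
  have hne : G ≠ [] := by
    intro hnil
    exact absurd (hGnil hnil) (by simp)
  have hmd : ∀ i (hi : i < G.length), ∃ v, pd (G.get ⟨i, hi⟩) = some v ∧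
      fn.toADF.MinDecIn v (G.get ⟨i, hi⟩) := by
    intro i hi
    have hmem := G.get_mem ⟨i, hi⟩
    obtain ⟨v, hv⟩ := Option.ne_none_iff_exists'.1 (hGsome _ hmem)
    exact ⟨v, hv, ((hPDFun _ (hGX _ hmem)).1 v hv).1⟩
  refine ⟨hne, hGlast hne, ⟨hGX, ?_⟩, ?_⟩
  · intro i hi Z hZ
    obtain ⟨v, hv, hvmd⟩ := hmd i hi
    obtain ⟨_, hhits, _⟩ := (minDec_iff fn).1 hvmd
    obtain ⟨z, hzZ, hzt⟩ := hhits Z hZ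
    have : z ∈ pdT pd (G.get ⟨i, hi⟩) := by rw [pdT_eq hv]; exact hzt
    rcases hT i hi this with hz0 | ⟨j, hj, hji, hjz⟩
    · exact absurd hz0 (Set.notMem_empty z)
    · exact ⟨j, hj, hji, by rw [hjz]; exact hzZ⟩
  · rw [hB]
    have : (⋃ c ∈ (∅ : Set α), pdF pd c) = ∅ := by simp
    rw [this, Set.empty_union]
    apply Set.iUnion₂_congr
    intro c hc
    obtain ⟨⟨i, hi⟩, rfl⟩ := List.mem_iff_get.1 hc
    obtain ⟨v, hv, hvmd⟩ := hmd i hi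
    rw [pdF_eq hv]
    exact ((minDec_iff fn).1 hvmd).1

end AFNAux

namespace AFNAux

open Dialectical

set_option linter.unusedSectionVars false

variable {α : Type} [Fintype α] (fn : AFN α)

lemma mem_of_getLast? {G : List α} {a : α} (h : G.getLast? = some a) : a ∈ G := by
  obtain ⟨i, hi, hget⟩ := getLast?_eq_get h
  rw [← hget]; exact G.get_mem ⟨i, hi⟩

lemma take_getLast {G : List α} {i : ℕ} (hi : i < G.length) :
    G.take (i + 1) ≠ [] ∧ (G.take (i + 1)).getLast? = some (G.get ⟨i, hi⟩) := by
  have hlen : (G.take (i + 1)).length = i + 1 := by simp [List.length_take]; omega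
  constructor
  · intro hnil; rw [hnil] at hlen; simp at hlen
  · rw [List.getLast?_eq_getElem?, hlen]
    simp only [Nat.add_sub_cancel]
    rw [List.getElem?_take, if_pos (by omega), List.getElem?_eq_getElem hi]
    rfl

lemma gr_relabel {X Y : Set α} {G : List α} (hGr : Gr fn X G) (h : ∀ b ∈ G, b ∈ Y) :
    Gr fn Y G := ⟨h, hGr.2⟩

lemma powerfulSeq_mono {X Y : Set α} (hXY : X ⊆ Y) {G : List α} {b : α}
    (h : fn.PowerfulSeq X G b) : fn.PowerfulSeq Y G b := by
  rw [powerfulSeq_iff] at h ⊢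
  exact ⟨h.1, h.2.1, gr_relabel fn h.2.2 (fun c hc => hXY (h.2.2.1 c hc))⟩

/-- The acyclic discarded set coincides with the AFN discarded set. -/
lemma aDiscarded_eq (hsc : fn.StronglyConsistent) (X : Set α) :
    fn.toADF.aDiscarded X = fn.discardedAtt X := by
  ext a
  simp only [ADF.aDiscarded, AFN.discardedAtt, Set.mem_setOf_eq]
  constructor
  · intro hd C hC haC
    by_contra hno
    push_neg at hno
    have haD : a ∈ derSet fn C := (coherent_iff_subset_derSet fn C).1 hC haC
    obtain ⟨G, hnd, hGr, hne, hlast⟩ := exists_grounded_list fn haD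
    have hGr' : Gr fn Set.univ G := gr_relabel fn hGr (fun b _ => trivial)
    obtain ⟨B, hev, hB⟩ := build_eval fn hsc hnd hGr' hne hlast
    obtain ⟨x, hx1, hx2⟩ := hd G B hev
    rw [hB] at hx1
    simp only [Set.mem_iUnion] at hx1
    obtain ⟨c, hcG, hcx⟩ := hx1
    exact hno c (hGr.1 c hcG) x hx2 hcx
  · intro hd G B hev
    obtain ⟨hne, hlast, hGr, hB⟩ := eval_extract fn hev
    set C : Set α := {c | c ∈ G} with hC
    have hGrC : Gr fn C G := gr_relabel fn hGr (fun b hb => hb)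
    have hcoh : fn.Coherent C := by
      intro c hcC
      obtain ⟨⟨i, hi⟩, rfl⟩ := List.mem_iff_get.1 hcC
      obtain ⟨htne, htlast⟩ := take_getLast (G := G) hi
      refine ⟨hcC, G.take (i + 1), ?_⟩
      rw [powerfulSeq_iff]
      exact ⟨htne, htlast, Gr.take fn hGrC (i + 1)⟩
    obtain ⟨c, hcC, e, heX, hRec⟩ := hd C hcoh (mem_of_getLast? hlast)
    refine ⟨e, ?_, heX⟩
    rw [hB]
    simp only [Set.mem_iUnion]
    exact ⟨c, hcC, hRec⟩

/-- strong coherence ↔ pd-acyclic conflict-freeness -/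
lemma sc_iff (hsc : fn.StronglyConsistent) (X : Set α) :
    fn.StronglyCoherent X ↔ fn.toADF.PDAcyclicCF X := by
  constructor
  · rintro ⟨hcf, hcoh⟩ a haX
    have haD := (coherent_iff_subset_derSet fn X).1 hcoh haX
    obtain ⟨G, hnd, hGr, hne, hlast⟩ := exists_grounded_list fn haD
    obtain ⟨B, hev, hB⟩ := build_eval fn hsc hnd hGr hne hlast
    refine ⟨G, B, hev, ?_⟩
    rw [hB]
    ext x
    simp only [Set.mem_inter_iff, Set.mem_iUnion, Set.mem_empty_iff_false, iff_false, not_and]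
    rintro ⟨c, hcG, hcx⟩ hxX
    exact hcf ⟨x, hxX, c, hGr.1 c hcG, hcx⟩
  · intro hpd
    have hcf : fn.ConflictFree X := by
      rintro ⟨b, hbX, c, hcX, hRbc⟩
      obtain ⟨G, B, hev, hBX⟩ := hpd c hcX
      obtain ⟨hne, hlast, hGr, hB⟩ := eval_extract fn hev
      have hbB : b ∈ B := by
        rw [hB]
        simp only [Set.mem_iUnion]
        exact ⟨c, mem_of_getLast? hlast, hRbc⟩
      exact absurd (Set.eq_empty_iff_forall_notMem.1 hBX b ⟨hbB, hbX⟩) (fun h => h)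
    refine ⟨hcf, ?_⟩
    intro a haX
    obtain ⟨G, B, hev, hBX⟩ := hpd a haX
    obtain ⟨hne, hlast, hGr, hB⟩ := eval_extract fn hev
    exact ⟨haX, G, (powerfulSeq_iff fn X G a).2 ⟨hne, hlast, hGr⟩⟩

lemma aRange_true_iff (X : Set α) (b : α) :
    fn.toADF.aRange X b = some true ↔ b ∈ X := by
  simp only [ADF.aRange, mkInterp]
  by_cases h1 : b ∈ X
  · simp [h1]
  · by_cases h2 : b ∈ fn.toADF.aDiscarded X \ X <;> simp [h1, h2]

lemma aRange_false_iff (X : Set α) (b : α) :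
    fn.toADF.aRange X b = some false ↔ (b ∈ fn.toADF.aDiscarded X ∧ b ∉ X) := by
  simp only [ADF.aRange, mkInterp]
  by_cases h1 : b ∈ X
  · simp [h1]
  · by_cases h2 : b ∈ fn.toADF.aDiscarded X \ X
    · simp only [if_neg h1, if_pos h2]
      simp only [Set.mem_diff] at h2
      simp [h2.1, h1]
    · simp only [if_neg h1, if_neg h2]
      simp only [Set.mem_diff, not_and] at h2
      constructor
      · intro hh; simp at hh
      · rintro ⟨hd, _⟩; exact absurd (h2 hd) (fun h => h h1)

lemma decIn_aRange_iff (hsc : fn.StronglyConsistent) (X : Set α) (e : α) :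
    fn.toADF.DecisivelyIn (fn.toADF.aRange X) e ↔
      (∀ b, fn.R b e → (b ∈ fn.discardedAtt X ∧ b ∉ X)) ∧
        (∀ Z, fn.N Z e → (Z ∩ X).Nonempty) := by
  rw [decIn_iff]
  constructor
  · rintro ⟨h1, h2⟩
    constructor
    · intro b hb
      have := (aRange_false_iff fn X b).1 (h1 b hb)
      rw [aDiscarded_eq fn hsc] at this
      exact this
    · intro Z hZ
      obtain ⟨z, hzZ, hzt⟩ := h2 Z hZ
      exact ⟨z, hzZ, (aRange_true_iff fn X z).1 hzt⟩
  · rintro ⟨h1, h2⟩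
    constructor
    · intro b hb
      rw [aRange_false_iff fn X b, aDiscarded_eq fn hsc]
      exact h1 b hb
    · intro Z hZ
      obtain ⟨z, hzZ, hzX⟩ := h2 Z hZ
      exact ⟨z, hzZ, (aRange_true_iff fn X z).2 hzX⟩

lemma union_singleton_eq {X : Set α} {a : α} (ha : a ∈ X) : X ∪ {a} = X :=
  Set.union_eq_self_of_subset_right (Set.singleton_subset_iff.2 ha)

/-- admissibility correspondence -/
lemma adm_iff (hsc : fn.StronglyConsistent) (X : Set α) :
    fn.Admissible X ↔ fn.toADF.AAAdmissible X := by
  constructor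
  · rintro ⟨hscoh, hdef⟩
    refine ⟨(sc_iff fn hsc X).1 hscoh, ?_⟩
    intro e heX
    rw [decIn_aRange_iff fn hsc]
    constructor
    · intro b hb
      refine ⟨(hdef e heX).2 b hb, fun hbX => hscoh.1 ⟨b, hbX, e, heX, hb⟩⟩
    · intro Z hZ
      obtain ⟨_, G, hPS⟩ := hscoh.2 e heX
      rw [powerfulSeq_iff] at hPS
      obtain ⟨hne, hlast, hGr⟩ := hPS
      obtain ⟨i, hi, hget⟩ := getLast?_eq_get hlast
      rw [← hget] at hZ
      obtain ⟨j, hj, hji, hmem⟩ := hGr.2 i hi Z hZ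
      exact ⟨G.get ⟨j, hj⟩, hmem, hGr.1 _ (G.get_mem ⟨j, hj⟩)⟩
  · rintro ⟨hpd, hdec⟩
    have hscoh := (sc_iff fn hsc X).2 hpd
    refine ⟨hscoh, ?_⟩
    intro a haX
    constructor
    · rw [union_singleton_eq haX]
      exact hscoh.2
    · intro b hb
      exact (((decIn_aRange_iff fn hsc X a).1 (hdec a haX)).1 b hb).1

/-- defense correspondence, for strongly coherent `X` -/
lemma defends_iff (hsc : fn.StronglyConsistent) {X : Set α}
    (hscoh : fn.StronglyCoherent X) (a : α) :
    fn.Defends X a ↔ fn.toADF.DecisivelyIn (fn.toADF.aRange X) a := by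
  rw [decIn_aRange_iff fn hsc]
  constructor
  · rintro ⟨hcohXa, hatt⟩
    constructor
    · intro b hb
      refine ⟨hatt b hb, ?_⟩
      intro hbX
      obtain ⟨c, hcX, e, heX, hRec⟩ := hatt b hb X hscoh.2 hbX
      exact hscoh.1 ⟨e, heX, c, hcX, hRec⟩
    · intro Z hZ
      obtain ⟨_, G, hPS⟩ := hcohXa a (Or.inr rfl)
      rw [powerfulSeq_iff] at hPS
      obtain ⟨hne, hlast, hGr⟩ := hPS
      -- first occurrence of a in G
      have hS : ∃ i, ∃ h : i < G.length, G.get ⟨i, h⟩ = a := getLast?_eq_get hlast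
      classical
      set P : ℕ → Prop := fun i => ∃ h : i < G.length, G.get ⟨i, h⟩ = a with hP
      have hPex : ∃ i, P i := hS
      set i0 := Nat.find hPex with hi0
      obtain ⟨hi0lt, hi0get⟩ := Nat.find_spec hPex
      rw [← hi0get] at hZ
      obtain ⟨j, hj, hji, hmem⟩ := hGr.2 i0 hi0lt Z hZ
      have hjX : G.get ⟨j, hj⟩ ∈ X := by
        rcases hGr.1 _ (G.get_mem ⟨j, hj⟩) with hX | hA
        · exact hX
        · exfalso
          have : P j := ⟨hj, hA⟩
          exact absurd (Nat.find_le this) (by omega)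
      exact ⟨G.get ⟨j, hj⟩, hmem, hjX⟩
  · rintro ⟨h1, h2⟩
    constructor
    · -- coherence of X ∪ {a}
      intro b hb
      rcases hb with hbX | hba
      · obtain ⟨_, G, hPS⟩ := hscoh.2 b hbX
        exact ⟨Or.inl hbX, G, powerfulSeq_mono fn Set.subset_union_left hPS⟩
      · rw [Set.mem_singleton_iff] at hba
        subst hba
        obtain ⟨G, hnd, hGr, hall⟩ := exists_enum fn X
        have hGrU : Gr fn (X ∪ {b}) G :=
          gr_relabel fn hGr (fun c hc => Or.inl (hGr.1 c hc))
        have happ : Gr fn (X ∪ {b}) (G ++ [b]) := by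
          apply Gr.append fn hGrU (Or.inr rfl)
          intro Z hZ
          obtain ⟨z, hzZ, hzX⟩ := h2 Z hZ
          have : z ∈ derSet fn X := (coherent_iff_subset_derSet fn X).1 hscoh.2 hzX
          exact ⟨z, hzZ, hall z this⟩
        refine ⟨Or.inr rfl, G ++ [b], ?_⟩
        rw [powerfulSeq_iff]
        exact ⟨by simp, by simp, happ⟩
    · intro b hb
      exact (h1 b hb).1

/-- completeness correspondence -/
lemma complete_iff (hsc : fn.StronglyConsistent) (X : Set α) :
    fn.Complete X ↔ fn.toADF.AAComplete X := by
  constructor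
  · rintro ⟨hadm, hclose⟩
    refine ⟨(adm_iff fn hsc X).1 hadm, ?_⟩
    intro e hdec
    exact hclose e ((defends_iff fn hsc hadm.1 e).2 hdec)
  · rintro ⟨haadm, hclose⟩
    have hadm := (adm_iff fn hsc X).2 haadm
    refine ⟨hadm, ?_⟩
    intro a hdef
    exact hclose a ((defends_iff fn hsc hadm.1 a).1 hdef)

end AFNAux

open Dialectical in
/-- semantics correspondence between a strongly consistent AFN and the
aa-family of semantics of its corresponding ADF. -/
theorem afn_toADF_semantics
    {α : Type} [Fintype α] (fn : AFN α) (h : fn.StronglyConsistent) (X : Set α) :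
    (fn.StronglyCoherent X ↔ fn.toADF.PDAcyclicCF X) ∧
    (fn.Admissible X ↔ fn.toADF.AAAdmissible X) ∧
    (fn.Complete X ↔ fn.toADF.AAComplete X) ∧
    (fn.Preferred X ↔ fn.toADF.AAPreferred X) ∧
    (fn.StableAtt X ↔ fn.toADF.IsStable X) ∧
    (fn.IsGrounded X ↔ fn.toADF.IsAcyclicGrounded X) := by
  refine ⟨AFNAux.sc_iff fn h X, AFNAux.adm_iff fn h X, AFNAux.complete_iff fn h X, ?_, ?_, ?_⟩
  · constructor
    · rintro ⟨hadm, hmax⟩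
      exact ⟨(AFNAux.adm_iff fn h X).1 hadm,
        fun Y hY hXY => hmax Y ((AFNAux.adm_iff fn h Y).2 hY) hXY⟩
    · rintro ⟨hadm, hmax⟩
      exact ⟨(AFNAux.adm_iff fn h X).2 hadm,
        fun Y hY hXY => hmax Y ((AFNAux.adm_iff fn h Y).1 hY) hXY⟩
  · constructor
    · rintro ⟨hsc', heq⟩
      exact ⟨(AFNAux.sc_iff fn h X).1 hsc', by rw [AFNAux.aDiscarded_eq fn h X]; exact heq⟩
    · rintro ⟨hpd, heq⟩
      exact ⟨(AFNAux.sc_iff fn h X).2 hpd, by rw [← AFNAux.aDiscarded_eq fn h X]; exact heq⟩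
  · constructor
    · rintro ⟨hc, hleast⟩
      exact ⟨(AFNAux.complete_iff fn h X).1 hc,
        fun Y hY => hleast Y ((AFNAux.complete_iff fn h Y).2 hY)⟩
    · rintro ⟨hc, hleast⟩
      exact ⟨(AFNAux.complete_iff fn h X).2 hc,
        fun Y hY => hleast Y ((AFNAux.complete_iff fn h Y).1 hY)⟩
end
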